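/- arXiv:1009.1965 — 6 statements merged into one kernel-verified Lean document; each statement's English description precedes it below -/
import Mathlib

section
/- Let Ω ⊂ ℝ^d be a compact convex set with nonempty interior, let x ∈ Ω, and let w : [0,∞) → ℝ^d be a continuous path with w(0) = 0. If (X, l, n) and (X̃, l̃, ñ) are both solutions of the Skorokhod problem for (x, w) in Ω, then X(t) = X̃(t) for all t ≥ 0. -/
open MeasureTheory Set
open scoped RealInnerProductSpace

/-- The Lebesgue–Stieltjes measure associated with a continuous nondecreasing
function `l : ℝ → ℝ`. -/
noncomputable def lsMeasure (l : ℝ → ℝ) (hm : Monotone l) (hc : Continuous l) :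
    MeasureTheory.Measure ℝ :=
  StieltjesFunction.measure ⟨l, hm, fun _ => hc.continuousWithinAt⟩

/-- A solution `(X, l, n)` of the Skorokhod problem for `(x, w)` in `Ω`:
`X` is a continuous path in `Ω` starting at `x`; `l` is a continuous nondecreasing
local time (extended by `0` to `(-∞,0]`) starting at `0`; `n` is a Borel measurable
vector field with `‖n s‖ ≤ 1`; the Stieltjes measure `dl` is carried by the times at
which `X` is on the boundary `∂Ω`; for `dl`-a.e. `s`, `n s` is an inward normal to `Ω`
at `X s`; and `X t = x + w t + ∫₀ᵗ n(s) dl(s)` for all `t ≥ 0`. -/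
structure IsSkorokhodSolution {d : ℕ} (Ω : Set (EuclideanSpace ℝ (Fin d)))
    (x : EuclideanSpace ℝ (Fin d)) (w : ℝ → EuclideanSpace ℝ (Fin d))
    (X : ℝ → EuclideanSpace ℝ (Fin d)) (l : ℝ → ℝ)
    (n : ℝ → EuclideanSpace ℝ (Fin d)) : Prop where
  contX : ContinuousOn X (Ici 0)
  mapsTo : ∀ t, 0 ≤ t → X t ∈ Ω
  init : X 0 = x
  l_mono : Monotone l
  l_cont : Continuous l
  l_zero : ∀ t ≤ (0 : ℝ), l t = 0
  n_meas : Measurable n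
  n_bound : ∀ s, ‖n s‖ ≤ 1
  carried : lsMeasure l l_mono l_cont {s | 0 ≤ s ∧ X s ∉ frontier Ω} = 0
  normal : ∀ᵐ (s : ℝ) ∂(lsMeasure l l_mono l_cont), ∀ z ∈ Ω, 0 ≤ ⟪z - X s, n s⟫
  eqn : ∀ t, 0 ≤ t →
    X t = x + w t + ∫ s in Ioc (0 : ℝ) t, n s ∂(lsMeasure l l_mono l_cont)

lemma integrableOn_of_bounded {d : ℕ} (μ : Measure ℝ) {a b : ℝ}
    (hfin : μ (Ioc a b) ≠ ⊤)
    {n : ℝ → EuclideanSpace ℝ (Fin d)} (hn : Measurable n) (hnb : ∀ s, ‖n s‖ ≤ 1) :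
    IntegrableOn n (Ioc a b) μ := by
  haveI : IsFiniteMeasure (μ.restrict (Ioc a b)) :=
    ⟨by rw [Measure.restrict_apply_univ]; exact lt_top_iff_ne_top.2 hfin⟩
  exact Integrable.mono' (integrable_const 1) hn.aestronglyMeasurable (ae_of_all _ hnb)

lemma inner_setIntegral_le {d : ℕ} (μ : Measure ℝ) {a b : ℝ}
    (hfin : μ (Ioc a b) ≠ ⊤)
    {n : ℝ → EuclideanSpace ℝ (Fin d)} (hn : Measurable n) (hnb : ∀ s, ‖n s‖ ≤ 1)
    {Y : ℝ → EuclideanSpace ℝ (Fin d)} {c : EuclideanSpace ℝ (Fin d)} {ε : ℝ}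
    (hae : ∀ᵐ s ∂μ.restrict (Ioc a b), ⟪Y s, n s⟫ ≤ 0)
    (hnear : ∀ s ∈ Ioc a b, ‖c - Y s‖ ≤ ε) :
    ⟪c, ∫ s in Ioc a b, n s ∂μ⟫ ≤ ε * (μ (Ioc a b)).toReal := by
  have hfm : IsFiniteMeasure (μ.restrict (Ioc a b)) :=
    ⟨by rw [Measure.restrict_apply_univ]; exact lt_top_iff_ne_top.2 hfin⟩
  have hint : IntegrableOn n (Ioc a b) μ :=
    Integrable.mono' (integrable_const 1) hn.aestronglyMeasurable (ae_of_all _ hnb)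
  have hint2 : Integrable (fun s => ⟪c, n s⟫) (μ.restrict (Ioc a b)) :=
    Integrable.mono' (integrable_const ‖c‖) (measurable_const.inner hn).aestronglyMeasurable
      (ae_of_all _ fun s => by
        rw [Real.norm_eq_abs]
        calc |⟪c, n s⟫| ≤ ‖c‖ * ‖n s‖ := abs_real_inner_le_norm _ _
        _ ≤ ‖c‖ * 1 := by nlinarith [norm_nonneg c, hnb s]
        _ = ‖c‖ := by ring)
  calc ⟪c, ∫ s in Ioc a b, n s ∂μ⟫ = ∫ s in Ioc a b, ⟪c, n s⟫ ∂μ :=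
        (integral_inner hint c).symm
    _ ≤ ∫ _ in Ioc a b, ε ∂μ := by
        refine integral_mono_ae hint2 (integrable_const ε) ?_
        filter_upwards [hae, ae_restrict_mem measurableSet_Ioc] with s h1 h2
        have hsplit : ⟪c, n s⟫ = ⟪Y s, n s⟫ + ⟪c - Y s, n s⟫ := by
          rw [← inner_add_left]; congr 1; abel
        have h3 : ⟪c - Y s, n s⟫ ≤ ‖c - Y s‖ * ‖n s‖ := real_inner_le_norm _ _
        nlinarith [hnear s h2, hnb s, norm_nonneg (c - Y s), norm_nonneg (n s)]
    _ = ε * (μ (Ioc a b)).toReal := by rw [setIntegral_const, smul_eq_mul, measureReal_def]; ring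

set_option maxHeartbeats 1000000 in
/-- Uniqueness of solutions of the Skorokhod problem in a compact convex set:
two solutions driven by the same continuous path `w` and the same starting point `x`
have the same reflected path. -/
theorem skorokhod_uniqueness {d : ℕ} {Ω : Set (EuclideanSpace ℝ (Fin d))}
    (hΩcomp : IsCompact Ω) (hΩconv : Convex ℝ Ω) (hΩint : (interior Ω).Nonempty)
    {x : EuclideanSpace ℝ (Fin d)} (hx : x ∈ Ω)
    {w : ℝ → EuclideanSpace ℝ (Fin d)} (hw : ContinuousOn w (Ici 0)) (hw0 : w 0 = 0)
    {X X' : ℝ → EuclideanSpace ℝ (Fin d)} {l l' : ℝ → ℝ}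
    {n n' : ℝ → EuclideanSpace ℝ (Fin d)}
    (h : IsSkorokhodSolution Ω x w X l n)
    (h' : IsSkorokhodSolution Ω x w X' l' n') :
    ∀ t, 0 ≤ t → X t = X' t := by
  intro t ht
  rcases ht.eq_or_lt with rfl | htpos
  · rw [h.init, h'.init]
  set μ := lsMeasure l h.l_mono h.l_cont with hμdef
  set μ' := lsMeasure l' h'.l_mono h'.l_cont with hμ'def
  have hμIoc : ∀ a b : ℝ, μ (Ioc a b) = ENNReal.ofReal (l b - l a) := fun a b =>
    StieltjesFunction.measure_Ioc _ a b
  have hμ'Ioc : ∀ a b : ℝ, μ' (Ioc a b) = ENNReal.ofReal (l' b - l' a) := fun a b =>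
    StieltjesFunction.measure_Ioc _ a b
  have hμfin : ∀ a b : ℝ, μ (Ioc a b) ≠ ⊤ := fun a b => by
    rw [hμIoc]; exact ENNReal.ofReal_ne_top
  have hμ'fin : ∀ a b : ℝ, μ' (Ioc a b) ≠ ⊤ := fun a b => by
    rw [hμ'Ioc]; exact ENNReal.ofReal_ne_top
  have hμReal : ∀ a b : ℝ, a ≤ b → (μ (Ioc a b)).toReal = l b - l a := fun a b hab => by
    rw [hμIoc, ENNReal.toReal_ofReal (sub_nonneg.2 (h.l_mono hab))]
  have hμ'Real : ∀ a b : ℝ, a ≤ b → (μ' (Ioc a b)).toReal = l' b - l' a := fun a b hab => by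
    rw [hμ'Ioc, ENNReal.toReal_ofReal (sub_nonneg.2 (h'.l_mono hab))]
  set Y := fun s => X s - X' s with hYdef
  have hYcont : ContinuousOn Y (Ici 0) := h.contX.sub h'.contX
  have hY0 : Y 0 = 0 := by simp [hYdef, h.init, h'.init]
  have hint : ∀ a b : ℝ, IntegrableOn n (Ioc a b) μ := fun a b =>
    integrableOn_of_bounded μ (hμfin a b) h.n_meas h.n_bound
  have hint' : ∀ a b : ℝ, IntegrableOn n' (Ioc a b) μ' := fun a b =>
    integrableOn_of_bounded μ' (hμ'fin a b) h'.n_meas h'.n_bound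
  have hYeq : ∀ s : ℝ, 0 ≤ s →
      Y s = (∫ u in Ioc 0 s, n u ∂μ) - ∫ u in Ioc 0 s, n' u ∂μ' := by
    intro s hs
    simp only [hYdef, h.eqn s hs, h'.eqn s hs]
    abel
  -- increments
  have hYinc : ∀ a b : ℝ, 0 ≤ a → a ≤ b →
      Y b - Y a = (∫ u in Ioc a b, n u ∂μ) - ∫ u in Ioc a b, n' u ∂μ' := by
    intro a b ha hab
    have hsplit : ∀ (ν : Measure ℝ) (m : ℝ → EuclideanSpace ℝ (Fin d)),
        IntegrableOn m (Ioc 0 a) ν → IntegrableOn m (Ioc a b) ν →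
        (∫ u in Ioc 0 b, m u ∂ν) = (∫ u in Ioc 0 a, m u ∂ν) + ∫ u in Ioc a b, m u ∂ν := by
      intro ν m h1 h2
      rw [← setIntegral_union (Set.Ioc_disjoint_Ioc_of_le le_rfl) measurableSet_Ioc h1 h2,
        Set.Ioc_union_Ioc_eq_Ioc ha hab]
    rw [hYeq a ha, hYeq b (ha.trans hab), hsplit μ n (hint 0 a) (hint a b),
      hsplit μ' n' (hint' 0 a) (hint' a b)]
    abel
  -- a.e. inner product sign conditions
  have hae1 : ∀ᵐ s ∂μ, 0 ≤ s → ⟪Y s, n s⟫ ≤ 0 := by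
    filter_upwards [h.normal] with s hs hs0
    have h1 : 0 ≤ ⟪X' s - X s, n s⟫ := hs (X' s) (h'.mapsTo s hs0)
    have h2 : Y s = -(X' s - X s) := by simp [hYdef]
    rw [h2, inner_neg_left]; linarith
  have hae2 : ∀ᵐ s ∂μ', 0 ≤ s → ⟪-Y s, n' s⟫ ≤ 0 := by
    filter_upwards [h'.normal] with s hs hs0
    have h1 : 0 ≤ ⟪X s - X' s, n' s⟫ := hs (X s) (h.mapsTo s hs0)
    have h2 : (-Y s : EuclideanSpace ℝ (Fin d)) = -(X s - X' s) := by simp [hYdef]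
    rw [h2, inner_neg_left]; linarith
  -- the key estimate
  have key : ∀ ε > 0, ‖Y t‖ ^ 2 ≤ ε := by
    intro ε hε
    have hUC : UniformContinuousOn Y (Icc 0 t) :=
      isCompact_Icc.uniformContinuousOn_of_continuous (hYcont.mono Icc_subset_Ici_self)
    set C : ℝ := (μ (Ioc 0 t)).toReal + (μ' (Ioc 0 t)).toReal + 1 with hCdef
    have hC : 0 < C := by positivity
    set ε0 : ℝ := ε / (2 * C) with hε0def
    have hε0 : 0 < ε0 := by positivity
    obtain ⟨δ, hδ, hδ'⟩ := Metric.uniformContinuousOn_iff.mp hUC ε0 hε0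
    obtain ⟨N, hN⟩ := exists_nat_gt (t / δ)
    have hNpos : 0 < (N : ℝ) := lt_of_le_of_lt (div_nonneg htpos.le hδ.le) hN
    have hstep : t / N < δ := by
      rw [div_lt_iff₀ hNpos]
      have h1 : t = t / δ * δ := by field_simp
      nlinarith [mul_lt_mul_of_pos_right hN hδ]
    have hstep0 : 0 < t / N := div_pos htpos hNpos
    set p : ℕ → ℝ := fun i => (i : ℝ) * (t / N) with hpdef
    have hp0 : p 0 = 0 := by simp [hpdef]
    have hpN : p N = t := by
      simp only [hpdef]; field_simp
    have hpmono : ∀ i j : ℕ, i ≤ j → p i ≤ p j := by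
      intro i j hij
      exact mul_le_mul_of_nonneg_right (Nat.cast_le.2 hij) hstep0.le
    have hpnonneg : ∀ i : ℕ, 0 ≤ p i := fun i => by rw [← hp0]; exact hpmono 0 i (Nat.zero_le i)
    have hpdiff : ∀ i : ℕ, p (i + 1) - p i = t / N := by
      intro i; simp only [hpdef, Nat.cast_add, Nat.cast_one]; ring
    -- per-step estimate
    have step : ∀ i : ℕ, i < N →
        ‖Y (p (i + 1))‖ ^ 2 - ‖Y (p i)‖ ^ 2 ≤
          2 * ε0 * ((μ (Ioc (p i) (p (i + 1)))).toReal + (μ' (Ioc (p i) (p (i + 1)))).toReal) := by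
      intro i hi
      set a := p i with hadef
      set b := p (i + 1) with hbdef
      have hab : a ≤ b := hpmono i (i + 1) (Nat.le_succ i)
      have ha0 : 0 ≤ a := hpnonneg i
      have hbt : b ≤ t := by rw [← hpN]; exact hpmono (i + 1) N hi
      have hnear : ∀ s ∈ Ioc a b, ‖Y b - Y s‖ ≤ ε0 := by
        intro s hs
        have hsIcc : s ∈ Icc (0 : ℝ) t := ⟨ha0.trans hs.1.le, hs.2.trans hbt⟩
        have hbIcc : b ∈ Icc (0 : ℝ) t := ⟨ha0.trans hab, hbt⟩
        have hd : dist b s < δ := by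
          rw [Real.dist_eq, abs_of_nonneg (sub_nonneg.2 hs.2)]
          calc b - s < b - a := by linarith [hs.1]
            _ = t / N := hpdiff i
            _ < δ := hstep
        have := hδ' b hbIcc s hsIcc hd
        rw [dist_eq_norm] at this
        exact this.le
      have hnear' : ∀ s ∈ Ioc a b, ‖-Y b - -Y s‖ ≤ ε0 := by
        intro s hs
        rw [show -Y b - -Y s = -(Y b - Y s) by abel, norm_neg]
        exact hnear s hs
      have hr1 : ∀ᵐ s ∂μ.restrict (Ioc a b), ⟪Y s, n s⟫ ≤ 0 := by
        filter_upwards [ae_restrict_of_ae hae1, ae_restrict_mem measurableSet_Ioc] with s h1 h2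
        exact h1 (ha0.trans h2.1.le)
      have hr2 : ∀ᵐ s ∂μ'.restrict (Ioc a b), ⟪-Y s, n' s⟫ ≤ 0 := by
        filter_upwards [ae_restrict_of_ae hae2, ae_restrict_mem measurableSet_Ioc] with s h1 h2
        exact h1 (ha0.trans h2.1.le)
      have e1 : ⟪Y b, ∫ u in Ioc a b, n u ∂μ⟫ ≤ ε0 * (μ (Ioc a b)).toReal :=
        inner_setIntegral_le μ (hμfin a b) h.n_meas h.n_bound hr1 hnear
      have e2 : ⟪-Y b, ∫ u in Ioc a b, n' u ∂μ'⟫ ≤ ε0 * (μ' (Ioc a b)).toReal :=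
        inner_setIntegral_le μ' (hμ'fin a b) h'.n_meas h'.n_bound hr2 hnear'
      have hinc := hYinc a b ha0 hab
      have hkey : ⟪Y b, Y b - Y a⟫ ≤
          ε0 * (μ (Ioc a b)).toReal + ε0 * (μ' (Ioc a b)).toReal := by
        rw [hinc, inner_sub_right]
        have : -⟪Y b, ∫ u in Ioc a b, n' u ∂μ'⟫ = ⟪-Y b, ∫ u in Ioc a b, n' u ∂μ'⟫ := by
          rw [inner_neg_left]
        linarith [e1, e2, this]
      have hsq : ‖Y b‖ ^ 2 - ‖Y a‖ ^ 2 ≤ 2 * ⟪Y b, Y b - Y a⟫ := by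
        have hexp : ‖Y b - Y a‖ ^ 2 = ‖Y b‖ ^ 2 - 2 * ⟪Y b, Y a⟫ + ‖Y a‖ ^ 2 :=
          norm_sub_sq_real (Y b) (Y a)
        have hir : ⟪Y b, Y b - Y a⟫ = ‖Y b‖ ^ 2 - ⟪Y b, Y a⟫ := by
          rw [inner_sub_right, real_inner_self_eq_norm_sq]
        nlinarith [sq_nonneg ‖Y b - Y a‖]
      calc ‖Y b‖ ^ 2 - ‖Y a‖ ^ 2 ≤ 2 * ⟪Y b, Y b - Y a⟫ := hsq
        _ ≤ 2 * ε0 * ((μ (Ioc a b)).toReal + (μ' (Ioc a b)).toReal) := by linarith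
    -- sum up
    have hsum : ‖Y t‖ ^ 2 = ∑ i ∈ Finset.range N, (‖Y (p (i + 1))‖ ^ 2 - ‖Y (p i)‖ ^ 2) := by
      rw [Finset.sum_range_sub (fun i => ‖Y (p i)‖ ^ 2), hpN, hp0, hY0]
      simp
    have hsum1 : ∑ i ∈ Finset.range N, (μ (Ioc (p i) (p (i + 1)))).toReal
        = (μ (Ioc 0 t)).toReal := by
      have : ∀ i ∈ Finset.range N, (μ (Ioc (p i) (p (i + 1)))).toReal = l (p (i + 1)) - l (p i) :=
        fun i _ => hμReal _ _ (hpmono i (i + 1) (Nat.le_succ i))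
      rw [Finset.sum_congr rfl this, Finset.sum_range_sub (fun i => l (p i)), hpN, hp0,
        hμReal 0 t htpos.le]
    have hsum2 : ∑ i ∈ Finset.range N, (μ' (Ioc (p i) (p (i + 1)))).toReal
        = (μ' (Ioc 0 t)).toReal := by
      have : ∀ i ∈ Finset.range N, (μ' (Ioc (p i) (p (i + 1)))).toReal = l' (p (i + 1)) - l' (p i) :=
        fun i _ => hμ'Real _ _ (hpmono i (i + 1) (Nat.le_succ i))
      rw [Finset.sum_congr rfl this, Finset.sum_range_sub (fun i => l' (p i)), hpN, hp0,
        hμ'Real 0 t htpos.le]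
    calc ‖Y t‖ ^ 2 = ∑ i ∈ Finset.range N, (‖Y (p (i + 1))‖ ^ 2 - ‖Y (p i)‖ ^ 2) := hsum
      _ ≤ ∑ i ∈ Finset.range N,
            2 * ε0 * ((μ (Ioc (p i) (p (i + 1)))).toReal + (μ' (Ioc (p i) (p (i + 1)))).toReal) :=
          Finset.sum_le_sum (fun i hi => step i (Finset.mem_range.mp hi))
      _ = 2 * ε0 * ((μ (Ioc 0 t)).toReal + (μ' (Ioc 0 t)).toReal) := by
          rw [← Finset.mul_sum, Finset.sum_add_distrib, hsum1, hsum2]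
      _ ≤ 2 * ε0 * C := by
          have : (μ (Ioc 0 t)).toReal + (μ' (Ioc 0 t)).toReal ≤ C := by
            rw [hCdef]; linarith
          nlinarith
      _ = ε := by rw [hε0def]; field_simp
  -- conclude
  have hle : ‖Y t‖ ^ 2 ≤ 0 := by
    refine le_of_forall_pos_le_add (fun ε hε => ?_)
    simpa using key ε hε
  have : Y t = 0 := by
    have := sq_nonneg ‖Y t‖
    have hnorm : ‖Y t‖ = 0 := by nlinarith
    simpa using hnorm
  have hYt : X t - X' t = 0 := this
  exact sub_eq_zero.mp hYt
end

section
/- Let Ω ⊂ ℝ^d be a compact convex set with nonempty interior, let x, y ∈ Ω, and let w : [0,∞) → ℝ^d be a continuous path with w(0) = 0. If (X, l, n) is a solution of the Skorokhod problem for (x, w) in Ω and (Y, λ, m) is a solution of the Skorokhod problem for (y, w) in Ω (i.e. with the same driving path w), then |X(t) − Y(t)| ≤ |x − y| for all t ≥ 0. -/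
set_option maxHeartbeats 1000000


open MeasureTheory Set
open scoped RealInnerProductSpace

/-- Pathwise contraction for the Skorokhod problem in a compact convex set:
if `(X, l, n)` solves the Skorokhod problem for `(x, w)` and `(Y, lam, m)` solves the
Skorokhod problem for `(y, w)` (same driving path `w`), then
`‖X t − Y t‖ ≤ ‖x − y‖` for all `t ≥ 0`. -/
theorem skorokhod_contraction {d : ℕ} {Ω : Set (EuclideanSpace ℝ (Fin d))}
    (hΩcomp : IsCompact Ω) (hΩconv : Convex ℝ Ω) (hΩint : (interior Ω).Nonempty)
    {x y : EuclideanSpace ℝ (Fin d)} (hx : x ∈ Ω) (hy : y ∈ Ω)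
    {w : ℝ → EuclideanSpace ℝ (Fin d)} (hw : ContinuousOn w (Ici 0)) (hw0 : w 0 = 0)
    {X Y : ℝ → EuclideanSpace ℝ (Fin d)} {l lam : ℝ → ℝ}
    {n m : ℝ → EuclideanSpace ℝ (Fin d)}
    (h : IsSkorokhodSolution Ω x w X l n)
    (h' : IsSkorokhodSolution Ω y w Y lam m) :
    ∀ t, 0 ≤ t → ‖X t - Y t‖ ≤ ‖x - y‖ := by
  obtain ⟨contX, mapsX, initX, lmono, lcont, lzero, nmeas, nbound, -, normalX, eqnX⟩ := h
  obtain ⟨contY, mapsY, initY, lammono, lamcont, lamzero, mmeas, mbound, -, normalY, eqnY⟩ := h'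
  set μ := lsMeasure l lmono lcont with hμdef
  set ν := lsMeasure lam lammono lamcont with hνdef
  set Z : ℝ → EuclideanSpace ℝ (Fin d) := fun u => X u - Y u with hZdef
  intro t ht
  -- basic measure facts
  have hμIoc : ∀ a b : ℝ, μ (Ioc a b) = ENNReal.ofReal (l b - l a) := fun a b =>
    StieltjesFunction.measure_Ioc _ a b
  have hνIoc : ∀ a b : ℝ, ν (Ioc a b) = ENNReal.ofReal (lam b - lam a) := fun a b =>
    StieltjesFunction.measure_Ioc _ a b
  have hμfin : ∀ a b : ℝ, μ (Ioc a b) < ⊤ := fun a b => by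
    rw [hμIoc]; exact ENNReal.ofReal_lt_top
  have hνfin : ∀ a b : ℝ, ν (Ioc a b) < ⊤ := fun a b => by
    rw [hνIoc]; exact ENNReal.ofReal_lt_top
  have hμto : ∀ a b : ℝ, a ≤ b → (μ (Ioc a b)).toReal = l b - l a := fun a b hab => by
    rw [hμIoc, ENNReal.toReal_ofReal (sub_nonneg.mpr (lmono hab))]
  have hνto : ∀ a b : ℝ, a ≤ b → (ν (Ioc a b)).toReal = lam b - lam a := fun a b hab => by
    rw [hνIoc, ENNReal.toReal_ofReal (sub_nonneg.mpr (lammono hab))]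
  have hInt_n : ∀ a b : ℝ, IntegrableOn n (Ioc a b) μ := fun a b =>
    Integrable.mono' (integrableOn_const (hμfin a b).ne)
      nmeas.aestronglyMeasurable.restrict (ae_of_all _ nbound)
  have hInt_m : ∀ a b : ℝ, IntegrableOn m (Ioc a b) ν := fun a b =>
    Integrable.mono' (integrableOn_const (hνfin a b).ne)
      mmeas.aestronglyMeasurable.restrict (ae_of_all _ mbound)
  -- increment identity
  have hZdiff : ∀ a b : ℝ, 0 ≤ a → a ≤ b →
      Z b - Z a = (∫ s in Ioc a b, n s ∂μ) - ∫ s in Ioc a b, m s ∂ν := by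
    intro a b ha hab
    have hb : 0 ≤ b := ha.trans hab
    have hn : ∫ s in Ioc (0:ℝ) b, n s ∂μ
        = (∫ s in Ioc (0:ℝ) a, n s ∂μ) + ∫ s in Ioc a b, n s ∂μ := by
      rw [← setIntegral_union (Ioc_disjoint_Ioc_of_le le_rfl) measurableSet_Ioc (hInt_n 0 a) (hInt_n a b),
        Ioc_union_Ioc_eq_Ioc ha hab]
    have hm2 : ∫ s in Ioc (0:ℝ) b, m s ∂ν
        = (∫ s in Ioc (0:ℝ) a, m s ∂ν) + ∫ s in Ioc a b, m s ∂ν := by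
      rw [← setIntegral_union (Ioc_disjoint_Ioc_of_le le_rfl) measurableSet_Ioc (hInt_m 0 a) (hInt_m a b),
        Ioc_union_Ioc_eq_Ioc ha hab]
    simp only [hZdef]
    rw [eqnX b hb, eqnX a ha, eqnY b hb, eqnY a ha, hn, hm2]
    abel
  -- main epsilon estimate
  have hmain : ∀ ε : ℝ, 0 < ε → ‖Z t‖^2 ≤ ‖Z 0‖^2 + ε * (3 * (l t + lam t)) := by
    intro ε hε
    -- single interval estimate
    have key : ∀ a b : ℝ, 0 ≤ a → a ≤ b → (∀ s ∈ Ioc a b, ‖Z s - Z a‖ ≤ ε) →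
        ‖Z b‖^2 - ‖Z a‖^2 ≤ 3 * ε * ((l b - l a) + (lam b - lam a)) := by
      intro a b ha hab hosc
      have hZab := hZdiff a b ha hab
      -- a.e. bounds
      have haeμ : ∀ᵐ s ∂μ.restrict (Ioc a b), ⟪Z a, n s⟫ ≤ ε := by
        filter_upwards [ae_restrict_of_ae normalX, ae_restrict_mem measurableSet_Ioc]
          with s hs hmem
        have hs0 : 0 ≤ s := ha.trans hmem.1.le
        have h1 : 0 ≤ ⟪Y s - X s, n s⟫ := hs _ (mapsY s hs0)
        have h2 : ⟪Z s, n s⟫ ≤ 0 := by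
          have hYX : Y s - X s = -(Z s) := by simp only [hZdef]; abel
          rw [hYX, inner_neg_left] at h1; linarith
        have h3 : ⟪Z a - Z s, n s⟫ ≤ ε := by
          calc ⟪Z a - Z s, n s⟫ ≤ ‖Z a - Z s‖ * ‖n s‖ := real_inner_le_norm _ _
            _ ≤ ε * 1 := by
                have hh := hosc s hmem
                rw [norm_sub_rev] at hh
                exact mul_le_mul hh (nbound s) (norm_nonneg _) hε.le
            _ = ε := mul_one ε
        have hsplit : ⟪Z a, n s⟫ = ⟪Z s, n s⟫ + ⟪Z a - Z s, n s⟫ := by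
          rw [← inner_add_left]; congr 1; abel
        linarith
      have haeν : ∀ᵐ s ∂ν.restrict (Ioc a b), -ε ≤ ⟪Z a, m s⟫ := by
        filter_upwards [ae_restrict_of_ae normalY, ae_restrict_mem measurableSet_Ioc]
          with s hs hmem
        have hs0 : 0 ≤ s := ha.trans hmem.1.le
        have h1 : 0 ≤ ⟪X s - Y s, m s⟫ := hs _ (mapsX s hs0)
        have h2 : 0 ≤ ⟪Z s, m s⟫ := by
          have hXY : X s - Y s = Z s := by simp only [hZdef]
          rwa [hXY] at h1
        have h3 : ⟪Z s - Z a, m s⟫ ≤ ε := by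
          calc ⟪Z s - Z a, m s⟫ ≤ ‖Z s - Z a‖ * ‖m s‖ := real_inner_le_norm _ _
            _ ≤ ε * 1 := mul_le_mul (hosc s hmem) (mbound s) (norm_nonneg _) hε.le
            _ = ε := mul_one ε
        have hsplit : ⟪Z s, m s⟫ = ⟪Z a, m s⟫ + ⟪Z s - Z a, m s⟫ := by
          rw [← inner_add_left]; congr 1; abel
        linarith
      -- integrability of the scalar integrands
      have hint_n : Integrable (fun s => ⟪Z a, n s⟫) (μ.restrict (Ioc a b)) := by
        refine Integrable.mono'
          (integrableOn_const (hμfin a b).ne :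
            IntegrableOn (fun _ => ‖Z a‖) _ _)
          ((measurable_const.inner nmeas).aestronglyMeasurable.restrict)
          (ae_of_all _ fun s => ?_)
        calc ‖⟪Z a, n s⟫‖ ≤ ‖Z a‖ * ‖n s‖ := abs_real_inner_le_norm _ _
          _ ≤ ‖Z a‖ * 1 := mul_le_mul_of_nonneg_left (nbound s) (norm_nonneg _)
          _ = ‖Z a‖ := mul_one _
      have hint_m : Integrable (fun s => ⟪Z a, m s⟫) (ν.restrict (Ioc a b)) := by
        refine Integrable.mono'
          (integrableOn_const (hνfin a b).ne :
            IntegrableOn (fun _ => ‖Z a‖) _ _)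
          ((measurable_const.inner mmeas).aestronglyMeasurable.restrict)
          (ae_of_all _ fun s => ?_)
        calc ‖⟪Z a, m s⟫‖ ≤ ‖Z a‖ * ‖m s‖ := abs_real_inner_le_norm _ _
          _ ≤ ‖Z a‖ * 1 := mul_le_mul_of_nonneg_left (mbound s) (norm_nonneg _)
          _ = ‖Z a‖ := mul_one _
      have hIμ : ∫ s in Ioc a b, ⟪Z a, n s⟫ ∂μ ≤ ε * (l b - l a) := by
        calc ∫ s in Ioc a b, ⟪Z a, n s⟫ ∂μ ≤ ∫ _s in Ioc a b, ε ∂μ :=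
              integral_mono_ae hint_n (integrableOn_const (hμfin a b).ne) haeμ
          _ = (μ (Ioc a b)).toReal • ε := setIntegral_const ε
          _ = ε * (l b - l a) := by rw [hμto a b hab, smul_eq_mul, mul_comm]
      have hIν : -(ε * (lam b - lam a)) ≤ ∫ s in Ioc a b, ⟪Z a, m s⟫ ∂ν := by
        calc -(ε * (lam b - lam a)) = ∫ _s in Ioc a b, (-ε) ∂ν := by
              rw [setIntegral_const, measureReal_def, hνto a b hab, smul_eq_mul]; ring
          _ ≤ ∫ s in Ioc a b, ⟪Z a, m s⟫ ∂ν :=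
              integral_mono_ae (integrableOn_const (hνfin a b).ne) hint_m haeν
      have hinner : ⟪Z a, Z b - Z a⟫
          = (∫ s in Ioc a b, ⟪Z a, n s⟫ ∂μ) - ∫ s in Ioc a b, ⟪Z a, m s⟫ ∂ν := by
        rw [hZab, inner_sub_right, ← integral_inner (hInt_n a b), ← integral_inner (hInt_m a b)]
      have hnorm : ‖Z b - Z a‖ ≤ (l b - l a) + (lam b - lam a) := by
        rw [hZab]
        refine (norm_sub_le _ _).trans ?_
        have b1 : ‖∫ s in Ioc a b, n s ∂μ‖ ≤ 1 * (μ (Ioc a b)).toReal :=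
          norm_setIntegral_le_of_norm_le_const (hμfin a b) (fun s _ => nbound s)
        have b2 : ‖∫ s in Ioc a b, m s ∂ν‖ ≤ 1 * (ν (Ioc a b)).toReal :=
          norm_setIntegral_le_of_norm_le_const (hνfin a b) (fun s _ => mbound s)
        rw [hμto a b hab] at b1; rw [hνto a b hab] at b2
        linarith
      have hosc_b : ‖Z b - Z a‖ ≤ ε := by
        rcases eq_or_lt_of_le hab with rfl | hab'
        · simp [hε.le]
        · exact hosc b ⟨hab', le_rfl⟩
      have hsq : ‖Z b‖^2 = ‖Z a‖^2 + 2 * ⟪Z a, Z b - Z a⟫ + ‖Z b - Z a‖^2 := by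
        have h0 : Z a + (Z b - Z a) = Z b := by abel
        have := norm_add_sq_real (Z a) (Z b - Z a)
        rwa [h0] at this
      have hsqb : ‖Z b - Z a‖^2 ≤ ε * ((l b - l a) + (lam b - lam a)) := by
        rw [pow_two]
        exact mul_le_mul hosc_b hnorm (norm_nonneg _) hε.le
      nlinarith [hinner, hIμ, hIν, hsq, hsqb]
    -- uniform continuity and partition
    have hZcont : ContinuousOn Z (Icc 0 t) := (contX.sub contY).mono Icc_subset_Ici_self
    have huc := isCompact_Icc.uniformContinuousOn_of_continuous hZcont
    rw [Metric.uniformContinuousOn_iff] at huc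
    obtain ⟨δ, hδpos, hδ⟩ := huc ε hε
    obtain ⟨k, hk⟩ := exists_nat_gt (t / δ)
    have hk0 : 0 < (k : ℝ) := lt_of_le_of_lt (div_nonneg ht hδpos.le) hk
    set c := t / k with hc
    have hc0 : 0 ≤ c := div_nonneg ht hk0.le
    have hcδ : c < δ := by
      rw [hc, div_lt_iff₀ hk0]
      have := (div_lt_iff₀ hδpos).mp hk
      linarith
    set p : ℕ → ℝ := fun i => i * c with hp
    have p0 : p 0 = 0 := by simp [hp]
    have pk : p k = t := by
      simp only [hp, hc]
      field_simp
    have pmono : ∀ i : ℕ, p i ≤ p (i + 1) := fun i => by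
      simp only [hp]; push_cast; nlinarith
    have pnonneg : ∀ i : ℕ, 0 ≤ p i := fun i => by
      simp only [hp]; positivity
    have ple : ∀ i : ℕ, i ≤ k → p i ≤ t := by
      intro i hi
      have hik : (i : ℝ) ≤ (k : ℝ) := Nat.cast_le.mpr hi
      have hpp : p i ≤ p k := by simp only [hp]; nlinarith
      rwa [pk] at hpp
    have step : ∀ i ∈ Finset.range k,
        ‖Z (p (i+1))‖^2 - ‖Z (p i)‖^2
          ≤ (3 * ε * (l (p (i+1)) + lam (p (i+1)))) - (3 * ε * (l (p i) + lam (p i))) := by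
      intro i hi
      have hik : i + 1 ≤ k := Finset.mem_range.mp hi
      have hbt : p (i+1) ≤ t := ple (i+1) hik
      have hosc : ∀ s ∈ Ioc (p i) (p (i+1)), ‖Z s - Z (p i)‖ ≤ ε := by
        intro s hsmem
        have hs0 : 0 ≤ s := (pnonneg i).trans hsmem.1.le
        have hst : s ≤ t := hsmem.2.trans hbt
        have hat : p i ≤ t := (pmono i).trans hbt
        have hdist : dist s (p i) < δ := by
          rw [Real.dist_eq, abs_of_nonneg (sub_nonneg.mpr hsmem.1.le)]
          have h1 : s ≤ p (i+1) := hsmem.2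
          have h2 : p (i+1) - p i = c := by simp only [hp]; push_cast; ring
          linarith
        have := hδ s ⟨hs0, hst⟩ (p i) ⟨pnonneg i, hat⟩ hdist
        rw [dist_eq_norm] at this
        exact this.le
      have := key (p i) (p (i+1)) (pnonneg i) (pmono i) hosc
      linarith
    have hsum : ‖Z t‖^2 - ‖Z 0‖^2
        = ∑ i ∈ Finset.range k, (‖Z (p (i+1))‖^2 - ‖Z (p i)‖^2) := by
      rw [Finset.sum_range_sub (fun i => ‖Z (p i)‖^2) k, p0, pk]
    have hsum2 : ∑ i ∈ Finset.range k,
        ((3 * ε * (l (p (i+1)) + lam (p (i+1)))) - (3 * ε * (l (p i) + lam (p i))))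
        = 3 * ε * (l t + lam t) - 3 * ε * (l 0 + lam 0) := by
      rw [Finset.sum_range_sub (fun i => 3 * ε * (l (p i) + lam (p i))) k, p0, pk]
    have hl0 : l 0 = 0 := lzero 0 le_rfl
    have hlam0 : lam 0 = 0 := lamzero 0 le_rfl
    have := Finset.sum_le_sum step
    rw [← hsum, hsum2, hl0, hlam0] at this
    nlinarith [this]
  -- conclude
  have hZ0 : Z 0 = x - y := by simp only [hZdef]; rw [initX, initY]
  have hC : 0 ≤ 3 * (l t + lam t) := by
    have h1 : l 0 ≤ l t := lmono ht
    have h2 : lam 0 ≤ lam t := lammono ht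
    have hl0 : l 0 = 0 := lzero 0 le_rfl
    have hlam0 : lam 0 = 0 := lamzero 0 le_rfl
    linarith
  have hsq : ‖Z t‖^2 ≤ ‖Z 0‖^2 := by
    refine le_of_forall_pos_le_add fun ε' hε' => ?_
    set C := 3 * (l t + lam t) with hCdef
    have h1 := hmain (ε' / (C + 1)) (by positivity)
    have h2 : ε' / (C + 1) * C ≤ ε' := by
      rw [div_mul_eq_mul_div, div_le_iff₀ (by positivity : (0:ℝ) < C + 1)]
      nlinarith
    linarith
  rw [hZ0] at hsq
  exact (pow_le_pow_iff_left₀ (norm_nonneg _) (norm_nonneg _) two_ne_zero).mp hsq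
end

section
/- Let w : [0,∞) → ℝ^d be continuous, let x, y ∈ ℝ^d, let l, λ : [0,∞) → [0,∞) be continuous nondecreasing functions with l(0) = λ(0) = 0, and let n, m : [0,∞) → ℝ^d be bounded Borel measurable maps. Define X(t) = x + w(t) + ∫₀ᵗ n(s) dl(s) and Y(t) = y + w(t) + ∫₀ᵗ m(s) dλ(s) (Lebesgue–Stieltjes integrals). Then for every t ≥ 0, |X(t) − Y(t)|² = |x − y|² + 2∫₀ᵗ ⟨X(s) − Y(s), n(s)⟩ dl(s) − 2∫₀ᵗ ⟨X(s) − Y(s), m(s)⟩ dλ(s). -/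
open MeasureTheory Set
open scoped RealInnerProductSpace

private lemma aux_swap {d : ℕ} (μ ν : Measure ℝ) [IsFiniteMeasure μ] [IsFiniteMeasure ν]
    {f g : ℝ → EuclideanSpace ℝ (Fin d)} (hf : Measurable f) (hg : Measurable g)
    {Cf Cg : ℝ} (hCf : ∀ s, ‖f s‖ ≤ Cf) (hCg : ∀ s, ‖g s‖ ≤ Cg) :
    Integrable (fun s => ⟪∫ u in Iic s, f u ∂μ, g s⟫) ν ∧
    Integrable (fun u => ⟪f u, ∫ s in Ici u, g s ∂ν⟫) μ ∧
    ∫ s, ⟪∫ u in Iic s, f u ∂μ, g s⟫ ∂ν = ∫ u, ⟪f u, ∫ s in Ici u, g s ∂ν⟫ ∂μ := by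
  have hCf0 : 0 ≤ Cf := (norm_nonneg _).trans (hCf 0)
  have hCg0 : 0 ≤ Cg := (norm_nonneg _).trans (hCg 0)
  set K : ℝ × ℝ → ℝ :=
    fun p => Set.indicator {q : ℝ × ℝ | q.2 ≤ q.1} (fun q => ⟪f q.2, g q.1⟫) p with hKdef
  have hA : MeasurableSet {q : ℝ × ℝ | q.2 ≤ q.1} :=
    measurableSet_le measurable_snd measurable_fst
  have hKmeas : Measurable K :=
    Measurable.indicator ((hf.comp measurable_snd).inner (hg.comp measurable_fst)) hA
  have hKbd : ∀ p : ℝ × ℝ, ‖K p‖ ≤ Cf * Cg := by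
    intro p
    have h0 : ‖(⟪f p.2, g p.1⟫ : ℝ)‖ ≤ Cf * Cg := by
      calc ‖(⟪f p.2, g p.1⟫ : ℝ)‖ ≤ ‖f p.2‖ * ‖g p.1‖ := norm_inner_le_norm _ _
        _ ≤ Cf * Cg := mul_le_mul (hCf _) (hCg _) (norm_nonneg _) hCf0
    simp only [hKdef, Set.indicator_apply]
    split_ifs
    · exact h0
    · simpa using mul_nonneg hCf0 hCg0
  have hKint : Integrable K (ν.prod μ) :=
    ⟨hKmeas.aestronglyMeasurable,
      HasFiniteIntegral.of_bounded (Filter.Eventually.of_forall hKbd)⟩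
  have h1 : ∀ s : ℝ, ∫ u, K (s, u) ∂μ = ⟪∫ u in Iic s, f u ∂μ, g s⟫ := by
    intro s
    have hfint : Integrable f (μ.restrict (Iic s)) :=
      ⟨hf.aestronglyMeasurable,
        HasFiniteIntegral.of_bounded (Filter.Eventually.of_forall hCf)⟩
    have hKs : (fun u => K (s, u)) = Set.indicator (Iic s) (fun u => ⟪f u, g s⟫) := by
      ext u
      simp [hKdef, Set.indicator_apply, Set.mem_Iic]
    rw [hKs, integral_indicator measurableSet_Iic]
    calc ∫ u in Iic s, ⟪f u, g s⟫ ∂μ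
        = ∫ u in Iic s, ⟪g s, f u⟫ ∂μ :=
          integral_congr_ae (Filter.Eventually.of_forall fun u => real_inner_comm _ _)
      _ = ⟪g s, ∫ u in Iic s, f u ∂μ⟫ := integral_inner hfint _
      _ = ⟪∫ u in Iic s, f u ∂μ, g s⟫ := real_inner_comm _ _
  have h2 : ∀ u : ℝ, ∫ s, K (s, u) ∂ν = ⟪f u, ∫ s in Ici u, g s ∂ν⟫ := by
    intro u
    have hgint : Integrable g (ν.restrict (Ici u)) :=
      ⟨hg.aestronglyMeasurable,
        HasFiniteIntegral.of_bounded (Filter.Eventually.of_forall hCg)⟩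
    have hKu : (fun s => K (s, u)) = Set.indicator (Ici u) (fun s => ⟪f u, g s⟫) := by
      ext s
      simp [hKdef, Set.indicator_apply, Set.mem_Ici]
    rw [hKu, integral_indicator measurableSet_Ici, integral_inner hgint]
  refine ⟨?_, ?_, ?_⟩
  · exact hKint.integral_prod_left.congr (Filter.Eventually.of_forall h1)
  · exact hKint.integral_prod_right.congr (Filter.Eventually.of_forall h2)
  · calc ∫ s, ⟪∫ u in Iic s, f u ∂μ, g s⟫ ∂ν
        = ∫ s, ∫ u, K (s, u) ∂μ ∂ν :=
          integral_congr_ae (Filter.Eventually.of_forall fun s => (h1 s).symm)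
      _ = ∫ u, ∫ s, K (s, u) ∂ν ∂μ := integral_integral_swap hKint
      _ = ∫ u, ⟪f u, ∫ s in Ici u, g s ∂ν⟫ ∂μ :=
          integral_congr_ae (Filter.Eventually.of_forall h2)

private lemma aux_key {d : ℕ} (μ ν : Measure ℝ) [IsFiniteMeasure μ] [IsFiniteMeasure ν]
    (hν : ∀ s : ℝ, ν {s} = 0)
    {f g : ℝ → EuclideanSpace ℝ (Fin d)} (hf : Measurable f) (hg : Measurable g)
    {Cf Cg : ℝ} (hCf : ∀ s, ‖f s‖ ≤ Cf) (hCg : ∀ s, ‖g s‖ ≤ Cg) :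
    (∫ s, ⟪∫ u in Iic s, f u ∂μ, g s⟫ ∂ν) + (∫ s, ⟪∫ u in Iic s, g u ∂ν, f s⟫ ∂μ)
      = ⟪∫ u, f u ∂μ, ∫ s, g s ∂ν⟫ := by
  obtain ⟨I1, I2, hswap⟩ := aux_swap μ ν hf hg hCf hCg
  obtain ⟨J1, -, -⟩ := aux_swap ν μ hg hf hCg hCf
  have hfint : Integrable f μ :=
    ⟨hf.aestronglyMeasurable, HasFiniteIntegral.of_bounded (Filter.Eventually.of_forall hCf)⟩
  have hgint : Integrable g ν :=
    ⟨hg.aestronglyMeasurable, HasFiniteIntegral.of_bounded (Filter.Eventually.of_forall hCg)⟩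
  have hJ1' : Integrable (fun s => ⟪f s, ∫ u in Iic s, g u ∂ν⟫) μ :=
    J1.congr (Filter.Eventually.of_forall fun s => real_inner_comm _ _)
  have hcomm : ∫ s, ⟪∫ u in Iic s, g u ∂ν, f s⟫ ∂μ
      = ∫ s, ⟪f s, ∫ u in Iic s, g u ∂ν⟫ ∂μ :=
    integral_congr_ae (Filter.Eventually.of_forall fun s => real_inner_comm _ _)
  rw [hswap, hcomm, ← integral_add I2 hJ1']
  have hpt : ∀ u : ℝ,
      ⟪f u, ∫ s in Ici u, g s ∂ν⟫ + ⟪f u, ∫ s in Iic u, g s ∂ν⟫ = ⟪f u, ∫ s, g s ∂ν⟫ := by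
    intro u
    rw [← inner_add_right]
    congr 1
    have hIic : ∫ s in Iic u, g s ∂ν = ∫ s in Iio u, g s ∂ν :=
      (setIntegral_congr_set (Iio_ae_eq_Iic' (hν u))).symm
    rw [hIic, ← compl_Ici, integral_add_compl measurableSet_Ici hgint]
  calc ∫ u, (⟪f u, ∫ s in Ici u, g s ∂ν⟫ + ⟪f u, ∫ s in Iic u, g s ∂ν⟫) ∂μ
      = ∫ u, ⟪f u, ∫ s, g s ∂ν⟫ ∂μ :=
        integral_congr_ae (Filter.Eventually.of_forall hpt)
    _ = ∫ u, ⟪∫ s, g s ∂ν, f u⟫ ∂μ :=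
        integral_congr_ae (Filter.Eventually.of_forall fun u => real_inner_comm _ _)
    _ = ⟪∫ s, g s ∂ν, ∫ u, f u ∂μ⟫ := integral_inner hfint _
    _ = ⟪∫ u, f u ∂μ, ∫ s, g s ∂ν⟫ := real_inner_comm _ _

/-- Deterministic Itô-type identity for differences of paths of bounded variation:
if `X t = x + w t + ∫₀ᵗ n dl` and `Y t = y + w t + ∫₀ᵗ m dλ` where `l, λ` are
continuous nondecreasing functions vanishing on `(-∞, 0]` and `n, m` are bounded
Borel maps, then for all `t ≥ 0`,
`‖X t − Y t‖² = ‖x − y‖² + 2∫₀ᵗ ⟪X − Y, n⟫ dl − 2∫₀ᵗ ⟪X − Y, m⟫ dλ`. -/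
theorem ito_identity_difference {d : ℕ}
    {w : ℝ → EuclideanSpace ℝ (Fin d)} (hw : ContinuousOn w (Ici 0))
    (x y : EuclideanSpace ℝ (Fin d))
    {l lam : ℝ → ℝ}
    (hl_mono : Monotone l) (hl_cont : Continuous l) (hl_zero : ∀ t ≤ (0 : ℝ), l t = 0)
    (hlam_mono : Monotone lam) (hlam_cont : Continuous lam)
    (hlam_zero : ∀ t ≤ (0 : ℝ), lam t = 0)
    {n m : ℝ → EuclideanSpace ℝ (Fin d)}
    (hn_meas : Measurable n) (hn_bdd : ∃ C, ∀ s, ‖n s‖ ≤ C)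
    (hm_meas : Measurable m) (hm_bdd : ∃ C, ∀ s, ‖m s‖ ≤ C)
    (X Y : ℝ → EuclideanSpace ℝ (Fin d))
    (hX : ∀ t, X t = x + w t + ∫ s in Ioc (0 : ℝ) t, n s ∂(lsMeasure l hl_mono hl_cont))
    (hY : ∀ t, Y t = y + w t +
      ∫ s in Ioc (0 : ℝ) t, m s ∂(lsMeasure lam hlam_mono hlam_cont)) :
    ∀ t, 0 ≤ t →
      ‖X t - Y t‖ ^ 2 = ‖x - y‖ ^ 2
        + 2 * ∫ s in Ioc (0 : ℝ) t, ⟪X s - Y s, n s⟫ ∂(lsMeasure l hl_mono hl_cont)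
        - 2 * ∫ s in Ioc (0 : ℝ) t, ⟪X s - Y s, m s⟫ ∂(lsMeasure lam hlam_mono hlam_cont) := by
  intro t ht
  obtain ⟨Cn, hCn⟩ := hn_bdd
  obtain ⟨Cm, hCm⟩ := hm_bdd
  set Ml := lsMeasure l hl_mono hl_cont with hMl
  set Mlam := lsMeasure lam hlam_mono hlam_cont with hMlam
  -- Singleton-null for the Stieltjes measures
  have hsingle : ∀ (f : ℝ → ℝ) (hm0 : Monotone f) (hc0 : Continuous f) (s : ℝ),
      lsMeasure f hm0 hc0 {s} = 0 := by
    intro f hm0 hc0 s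
    have hll : Function.leftLim f s = f s := by
      apply leftLim_eq_of_tendsto (f := f) (a := s) (y := f s)
      · exact (hc0.tendsto s).mono_left nhdsWithin_le_nhds
    show (⟨f, hm0, fun _ => hc0.continuousWithinAt⟩ : StieltjesFunction ℝ).measure {s} = 0
    rw [StieltjesFunction.measure_singleton]
    simp [hll]
  set μ' := Ml.restrict (Ioc (0:ℝ) t) with hμ'
  set ν' := Mlam.restrict (Ioc (0:ℝ) t) with hν'
  haveI : IsFiniteMeasure μ' := by
    constructor
    rw [Measure.restrict_apply_univ]
    show (⟨l, hl_mono, fun _ => hl_cont.continuousWithinAt⟩ : StieltjesFunction ℝ).measure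
      (Ioc 0 t) < ⊤
    rw [StieltjesFunction.measure_Ioc]
    exact ENNReal.ofReal_lt_top
  haveI : IsFiniteMeasure ν' := by
    constructor
    rw [Measure.restrict_apply_univ]
    show (⟨lam, hlam_mono, fun _ => hlam_cont.continuousWithinAt⟩ : StieltjesFunction ℝ).measure
      (Ioc 0 t) < ⊤
    rw [StieltjesFunction.measure_Ioc]
    exact ENNReal.ofReal_lt_top
  have hμ's : ∀ s : ℝ, μ' {s} = 0 := by
    intro s
    rw [hμ', Measure.restrict_apply (MeasurableSet.singleton s)]
    exact le_antisymm ((measure_mono Set.inter_subset_left).trans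
      (hsingle l hl_mono hl_cont s).le) zero_le
  have hν's : ∀ s : ℝ, ν' {s} = 0 := by
    intro s
    rw [hν', Measure.restrict_apply (MeasurableSet.singleton s)]
    exact le_antisymm ((measure_mono Set.inter_subset_left).trans
      (hsingle lam hlam_mono hlam_cont s).le) zero_le
  have hnint : Integrable n μ' :=
    ⟨hn_meas.aestronglyMeasurable, HasFiniteIntegral.of_bounded (Filter.Eventually.of_forall hCn)⟩
  have hmint : Integrable m ν' :=
    ⟨hm_meas.aestronglyMeasurable, HasFiniteIntegral.of_bounded (Filter.Eventually.of_forall hCm)⟩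
  set F : ℝ → EuclideanSpace ℝ (Fin d) := fun s => ∫ u in Iic s, n u ∂μ' with hF
  set G : ℝ → EuclideanSpace ℝ (Fin d) := fun s => ∫ u in Iic s, m u ∂ν' with hG
  set z := x - y with hz
  set Ft := ∫ u, n u ∂μ' with hFt
  set Gt := ∫ u, m u ∂ν' with hGt
  -- the difference path
  have hrestr : ∀ s : ℝ, s ≤ t → Iic s ∩ Ioc (0:ℝ) t = Ioc 0 s := by
    intro s hs
    ext u
    constructor
    · rintro ⟨h1, h2, h3⟩
      exact ⟨h2, h1⟩
    · rintro ⟨h1, h2⟩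
      exact ⟨h2, h1, h2.trans hs⟩
  have hXY : ∀ s : ℝ, s ≤ t → X s - Y s = z + F s - G s := by
    intro s hs
    have e1 : F s = ∫ u in Ioc (0:ℝ) s, n u ∂Ml := by
      rw [hF]
      show ∫ u, n u ∂(μ'.restrict (Iic s)) = _
      rw [hμ', Measure.restrict_restrict measurableSet_Iic, hrestr s hs]
    have e2 : G s = ∫ u in Ioc (0:ℝ) s, m u ∂Mlam := by
      rw [hG]
      show ∫ u, m u ∂(ν'.restrict (Iic s)) = _
      rw [hν', Measure.restrict_restrict measurableSet_Iic, hrestr s hs]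
    rw [hX s, hY s, e1, e2, hz]
    abel
  have hXYt : X t - Y t = z + Ft - Gt := by
    have := hXY t le_rfl
    rw [this]
    have hFt' : F t = Ft := by
      rw [hF, hFt]
      show ∫ u, n u ∂(μ'.restrict (Iic t)) = _
      rw [hμ', Measure.restrict_restrict measurableSet_Iic, hrestr t le_rfl]
    have hGt' : G t = Gt := by
      rw [hG, hGt]
      show ∫ u, m u ∂(ν'.restrict (Iic t)) = _
      rw [hν', Measure.restrict_restrict measurableSet_Iic, hrestr t le_rfl]
    rw [hFt', hGt']
  -- integrabilities
  have hzn : Integrable (fun s => ⟪z, n s⟫) μ' := Integrable.const_inner z hnint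
  have hzm : Integrable (fun s => ⟪z, m s⟫) ν' := Integrable.const_inner z hmint
  have hFn : Integrable (fun s => ⟪F s, n s⟫) μ' :=
    (aux_swap μ' μ' hn_meas hn_meas hCn hCn).1
  have hGn : Integrable (fun s => ⟪G s, n s⟫) μ' :=
    (aux_swap ν' μ' hm_meas hn_meas hCm hCn).1
  have hFm : Integrable (fun s => ⟪F s, m s⟫) ν' :=
    (aux_swap μ' ν' hn_meas hm_meas hCn hCm).1
  have hGm : Integrable (fun s => ⟪G s, m s⟫) ν' :=
    (aux_swap ν' ν' hm_meas hm_meas hCm hCm).1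
  -- rewrite the two integrals on the RHS
  have hint1 : ∫ s in Ioc (0:ℝ) t, ⟪X s - Y s, n s⟫ ∂Ml
      = (∫ s, ⟪z, n s⟫ ∂μ') + (∫ s, ⟪F s, n s⟫ ∂μ') - (∫ s, ⟪G s, n s⟫ ∂μ') := by
    have hcg : ∫ s, ⟪X s - Y s, n s⟫ ∂μ'
        = ∫ s, (⟪z, n s⟫ + ⟪F s, n s⟫ - ⟪G s, n s⟫) ∂μ' := by
      refine integral_congr_ae ?_
      filter_upwards [ae_restrict_mem measurableSet_Ioc] with s hs
      rw [hXY s hs.2, inner_sub_left, inner_add_left]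
    have hsum : Integrable (fun s => ⟪z, n s⟫ + ⟪F s, n s⟫) μ' := hzn.add hFn
    rw [show ∫ s in Ioc (0:ℝ) t, ⟪X s - Y s, n s⟫ ∂Ml = ∫ s, ⟪X s - Y s, n s⟫ ∂μ' from rfl,
      hcg, integral_sub hsum hGn, integral_add hzn hFn]
  have hint2 : ∫ s in Ioc (0:ℝ) t, ⟪X s - Y s, m s⟫ ∂Mlam
      = (∫ s, ⟪z, m s⟫ ∂ν') + (∫ s, ⟪F s, m s⟫ ∂ν') - (∫ s, ⟪G s, m s⟫ ∂ν') := by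
    have hcg : ∫ s, ⟪X s - Y s, m s⟫ ∂ν'
        = ∫ s, (⟪z, m s⟫ + ⟪F s, m s⟫ - ⟪G s, m s⟫) ∂ν' := by
      refine integral_congr_ae ?_
      filter_upwards [ae_restrict_mem measurableSet_Ioc] with s hs
      rw [hXY s hs.2, inner_sub_left, inner_add_left]
    have hsum : Integrable (fun s => ⟪z, m s⟫ + ⟪F s, m s⟫) ν' := hzm.add hFm
    rw [show ∫ s in Ioc (0:ℝ) t, ⟪X s - Y s, m s⟫ ∂Mlam = ∫ s, ⟪X s - Y s, m s⟫ ∂ν' from rfl,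
      hcg, integral_sub hsum hGm, integral_add hzm hFm]
  -- key identities
  have key1 : (∫ s, ⟪F s, n s⟫ ∂μ') + (∫ s, ⟪F s, n s⟫ ∂μ') = ⟪Ft, Ft⟫ :=
    aux_key μ' μ' hμ's hn_meas hn_meas hCn hCn
  have key2 : (∫ s, ⟪G s, m s⟫ ∂ν') + (∫ s, ⟪G s, m s⟫ ∂ν') = ⟪Gt, Gt⟫ :=
    aux_key ν' ν' hν's hm_meas hm_meas hCm hCm
  have keyc : (∫ s, ⟪F s, m s⟫ ∂ν') + (∫ s, ⟪G s, n s⟫ ∂μ') = ⟪Ft, Gt⟫ :=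
    aux_key μ' ν' hν's hn_meas hm_meas hCn hCm
  have hzFt : ∫ s, ⟪z, n s⟫ ∂μ' = ⟪z, Ft⟫ := integral_inner hnint z
  have hzGt : ∫ s, ⟪z, m s⟫ ∂ν' = ⟪z, Gt⟫ := integral_inner hmint z
  -- expand the square
  have hsq : ‖z + Ft - Gt‖ ^ 2
      = ‖z‖ ^ 2 + 2 * ⟪z, Ft⟫ - 2 * ⟪z, Gt⟫ + ⟪Ft, Ft⟫ + ⟪Gt, Gt⟫ - 2 * ⟪Ft, Gt⟫ := by
    have h1 : z + Ft - Gt = z + (Ft - Gt) := by abel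
    rw [h1, norm_add_sq_real, inner_sub_right,
      ← real_inner_self_eq_norm_sq (Ft - Gt), inner_sub_sub_self, real_inner_comm Gt Ft]
    ring
  rw [hXYt, hint1, hint2, hzFt, hzGt, hsq, hz]
  linarith [key1, key2, keyc]
end

section
/- Let Ω ⊂ ℝ^d be a compact convex set with nonempty interior, let (E, 𝓕, μ) be a probability space, and let Φ : Ω × E → Ω be such that Φ(·, ω) is 1-Lipschitz for every ω ∈ E and Φ(x, ·) is measurable for every x ∈ Ω. For continuous f : Ω → ℝ define (Pf)(x) = ∫_E f(Φ(x, ω)) dμ(ω). Then: (a) if f is Lipschitz with constant L, so is Pf; and (b) if f is C¹ on Ω (continuous on Ω, differentiable on the interior, with gradient extending continuously to Ω), then at every interior point x at which Pf is differentiable, |∇Pf(x)| ≤ (P|∇f|)(x). -/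
set_option maxHeartbeats 1000000
open MeasureTheory Set

lemma comp_meas {d : ℕ} {E : Type*} [MeasurableSpace E]
    {Ω : Set (EuclideanSpace ℝ (Fin d))}
    {g : EuclideanSpace ℝ (Fin d) → ℝ} (hg : ContinuousOn g Ω)
    {φ : E → EuclideanSpace ℝ (Fin d)} (hφ : Measurable φ) (hmaps : ∀ ω, φ ω ∈ Ω) :
    Measurable fun ω => g (φ ω) := by
  have hφ' : Measurable (fun ω => (⟨φ ω, hmaps ω⟩ : Ω)) := hφ.subtype_mk
  have hg' : Continuous (Ω.restrict g) := continuousOn_iff_continuous_restrict.mp hg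
  exact hg'.measurable.comp hφ'

lemma comp_integrable {d : ℕ} {E : Type*} [MeasurableSpace E]
    (μ : Measure E) [IsProbabilityMeasure μ]
    {Ω : Set (EuclideanSpace ℝ (Fin d))} (hΩcomp : IsCompact Ω)
    {g : EuclideanSpace ℝ (Fin d) → ℝ} (hg : ContinuousOn g Ω)
    {φ : E → EuclideanSpace ℝ (Fin d)} (hφ : Measurable φ) (hmaps : ∀ ω, φ ω ∈ Ω) :
    Integrable (fun ω => g (φ ω)) μ := by
  obtain ⟨M, hM⟩ := hΩcomp.exists_bound_of_continuousOn hg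
  exact ⟨(comp_meas hg hφ hmaps).aestronglyMeasurable,
    HasFiniteIntegral.of_bounded (C := M) (Filter.Eventually.of_forall fun ω => hM _ (hmaps ω))⟩
open InnerProductSpace

lemma mvt_aux {d : ℕ} {Ω : Set (EuclideanSpace ℝ (Fin d))}
    (hΩconv : Convex ℝ Ω) {z : EuclideanSpace ℝ (Fin d)} (hz : z ∈ interior Ω)
    {f : EuclideanSpace ℝ (Fin d) → ℝ} {gf : EuclideanSpace ℝ (Fin d) → EuclideanSpace ℝ (Fin d)}
    (hf : ContinuousOn f Ω)
    (hdiff : ∀ x ∈ interior Ω, HasGradientAt f (gf x) x)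
    {a b : EuclideanSpace ℝ (Fin d)} (ha : a ∈ Ω) (hb : b ∈ Ω)
    {C r : ℝ} (hC : 0 ≤ C) (hr : ‖b - a‖ < r)
    (hbound : ∀ w ∈ Ω, ‖w - a‖ < r → ‖gf w‖ ≤ C) :
    |f b - f a| ≤ C * ‖b - a‖ := by
  set A : ℝ → EuclideanSpace ℝ (Fin d) := fun θ => θ • z + (1 - θ) • a with hA
  set B : ℝ → EuclideanSpace ℝ (Fin d) := fun θ => θ • z + (1 - θ) • b with hB
  set θ1 : ℝ := min 1 ((r - ‖b - a‖) / (‖z - a‖ + 1)) with hθ1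
  have hza : (0:ℝ) < ‖z - a‖ + 1 := by positivity
  have hθ1pos : 0 < θ1 := lt_min one_pos (div_pos (by linarith) hza)
  -- the main bound for θ ∈ Ioo 0 θ1
  have key : ∀ θ ∈ Ioo (0:ℝ) θ1, |f (B θ) - f (A θ)| ≤ C * ‖b - a‖ := by
    intro θ ⟨hθ0, hθt⟩
    have hθ1' : θ < 1 := lt_of_lt_of_le hθt (min_le_left _ _)
    have hθr : θ * (‖z - a‖ + 1) < r - ‖b - a‖ := by
      have := lt_of_lt_of_le hθt (min_le_right _ _)
      calc θ * (‖z - a‖ + 1) < (r - ‖b - a‖) / (‖z - a‖ + 1) * (‖z - a‖ + 1) :=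
            mul_lt_mul_of_pos_right this hza
        _ = r - ‖b - a‖ := by field_simp
    have hAθ : A θ ∈ interior Ω :=
      hΩconv.combo_interior_self_mem_interior hz ha hθ0 (by linarith) (by ring)
    have hBθ : B θ ∈ interior Ω :=
      hΩconv.combo_interior_self_mem_interior hz hb hθ0 (by linarith) (by ring)
    have hseg : segment ℝ (A θ) (B θ) ⊆ interior Ω :=
      (hΩconv.interior).segment_subset hAθ hBθ
    -- gradient bound on the segment
    have hbd : ∀ w ∈ segment ℝ (A θ) (B θ),
        ‖(toDual ℝ (EuclideanSpace ℝ (Fin d))) (gf w)‖ ≤ C := by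
      rintro w hw
      have hwΩ : w ∈ Ω := interior_subset (hseg hw)
      rw [LinearIsometryEquiv.norm_map]
      obtain ⟨s1, s2, hs1, hs2, hsum, rfl⟩ := hw
      have hs1' : s1 = 1 - s2 := by linarith
      subst hs1'
      have hwa : (1 - s2) • A θ + s2 • B θ - a
          = θ • (z - a) + ((1 - θ) * s2) • (b - a) := by
        simp only [hA, hB]; module
      have hnorm : ‖(1 - s2) • A θ + s2 • B θ - a‖ < r := by
        rw [hwa]
        have e1 : ‖θ • (z - a) + ((1 - θ) * s2) • (b - a)‖
            ≤ ‖θ • (z - a)‖ + ‖((1 - θ) * s2) • (b - a)‖ := norm_add_le _ _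
        have e2 : ‖θ • (z - a)‖ = θ * ‖z - a‖ := by
          rw [norm_smul, Real.norm_eq_abs, abs_of_pos hθ0]
        have e3 : ‖((1 - θ) * s2) • (b - a)‖ = ((1 - θ) * s2) * ‖b - a‖ := by
          rw [norm_smul, Real.norm_eq_abs, abs_of_nonneg (by nlinarith)]
        have h1 : (1 - θ) * s2 ≤ 1 := by nlinarith
        have h2 : ((1 - θ) * s2) * ‖b - a‖ ≤ ‖b - a‖ := by
          nlinarith [norm_nonneg (b - a)]
        have h3 : θ * ‖z - a‖ ≤ θ * (‖z - a‖ + 1) := by nlinarith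
        linarith [e1, e2.le, e2.ge, e3.le, e3.ge]
      exact hbound _ hwΩ hnorm
    have hderiv : ∀ w ∈ segment ℝ (A θ) (B θ),
        HasFDerivWithinAt f ((toDual ℝ (EuclideanSpace ℝ (Fin d))) (gf w))
          (segment ℝ (A θ) (B θ)) w := fun w hw =>
      ((hdiff w (hseg hw)).hasFDerivAt).hasFDerivWithinAt
    have := (convex_segment (A θ) (B θ)).norm_image_sub_le_of_norm_hasFDerivWithin_le
      hderiv hbd (left_mem_segment ℝ (A θ) (B θ)) (right_mem_segment ℝ (A θ) (B θ))
    have hBA : B θ - A θ = (1 - θ) • (b - a) := by simp only [hA, hB]; module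
    rw [hBA, norm_smul] at this
    have h1θ : ‖(1 - θ : ℝ)‖ = 1 - θ := by
      rw [Real.norm_eq_abs, abs_of_nonneg (by linarith)]
    rw [h1θ, Real.norm_eq_abs] at this
    calc |f (B θ) - f (A θ)| ≤ C * ((1 - θ) * ‖b - a‖) := this
      _ ≤ C * ‖b - a‖ := by nlinarith [norm_nonneg (b - a), mul_nonneg hC (mul_nonneg hθ0.le (norm_nonneg (b - a)))]
  -- pass to the limit θ → 0⁺
  have hmemA : ∀ θ ∈ Ioo (0:ℝ) θ1, A θ ∈ Ω := fun θ hθ =>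
    interior_subset (hΩconv.combo_interior_self_mem_interior hz ha hθ.1
      (by linarith [lt_of_lt_of_le hθ.2 (min_le_left _ _)]) (by ring))
  have hmemB : ∀ θ ∈ Ioo (0:ℝ) θ1, B θ ∈ Ω := fun θ hθ =>
    interior_subset (hΩconv.combo_interior_self_mem_interior hz hb hθ.1
      (by linarith [lt_of_lt_of_le hθ.2 (min_le_left _ _)]) (by ring))
  have hIoo : Ioo (0:ℝ) θ1 ∈ nhdsWithin (0:ℝ) (Ioi 0) := Ioo_mem_nhdsGT_of_mem ⟨le_rfl, hθ1pos⟩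
  have hA0 : Filter.Tendsto A (nhdsWithin (0:ℝ) (Ioi 0)) (nhdsWithin a Ω) := by
    rw [tendsto_nhdsWithin_iff]
    constructor
    · have hcA : Continuous A := by
        simp only [hA]
        exact ((continuous_id.smul continuous_const).add
          ((continuous_const.sub continuous_id).smul continuous_const))
      have : Filter.Tendsto A (nhds (0:ℝ)) (nhds (A 0)) := hcA.tendsto 0
      have hA0v : A 0 = a := by simp [hA]
      rw [hA0v] at this
      exact this.mono_left nhdsWithin_le_nhds
    · exact Filter.eventually_of_mem hIoo (fun θ hθ => hmemA θ hθ)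
  have hB0 : Filter.Tendsto B (nhdsWithin (0:ℝ) (Ioi 0)) (nhdsWithin b Ω) := by
    rw [tendsto_nhdsWithin_iff]
    constructor
    · have hcB : Continuous B := by
        simp only [hB]
        exact ((continuous_id.smul continuous_const).add
          ((continuous_const.sub continuous_id).smul continuous_const))
      have : Filter.Tendsto B (nhds (0:ℝ)) (nhds (B 0)) := hcB.tendsto 0
      have hB0v : B 0 = b := by simp [hB]
      rw [hB0v] at this
      exact this.mono_left nhdsWithin_le_nhds
    · exact Filter.eventually_of_mem hIoo (fun θ hθ => hmemB θ hθ)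
  have htend : Filter.Tendsto (fun θ => |f (B θ) - f (A θ)|) (nhdsWithin (0:ℝ) (Ioi 0))
      (nhds |f b - f a|) :=
    (((hf b hb).tendsto.comp hB0).sub ((hf a ha).tendsto.comp hA0)).abs
  exact le_of_tendsto htend (Filter.eventually_of_mem hIoo key)



/-- Gradient contraction for a Markov operator given by a measurable family of
`1`-Lipschitz maps of a compact convex set `Ω ⊂ ℝ^d` into itself:
with `(Pf)(x) = ∫_E f(Φ(x, ω)) dμ(ω)` for a probability measure `μ`,
(a) `P` preserves Lipschitz constants of Lipschitz functions, and
(b) if `f` is `C¹` on `Ω` with gradient `gf` (continuous on `Ω`), then at every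
interior point `x` at which `Pf` has a gradient `G`, `‖G‖ ≤ (P‖gf‖)(x)`. -/
theorem markov_gradient_contraction {d : ℕ} {E : Type*} [MeasurableSpace E]
    (μ : Measure E) [IsProbabilityMeasure μ]
    {Ω : Set (EuclideanSpace ℝ (Fin d))}
    (hΩcomp : IsCompact Ω) (hΩconv : Convex ℝ Ω) (hΩint : (interior Ω).Nonempty)
    (Φ : EuclideanSpace ℝ (Fin d) → E → EuclideanSpace ℝ (Fin d))
    (hΦmaps : ∀ x ∈ Ω, ∀ ω, Φ x ω ∈ Ω)
    (hΦlip : ∀ ω, ∀ x ∈ Ω, ∀ y ∈ Ω, ‖Φ x ω - Φ y ω‖ ≤ ‖x - y‖)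
    (hΦmeas : ∀ x ∈ Ω, Measurable fun ω => Φ x ω) :
    (∀ (f : EuclideanSpace ℝ (Fin d) → ℝ) (L : ℝ), ContinuousOn f Ω →
      (∀ x ∈ Ω, ∀ y ∈ Ω, |f x - f y| ≤ L * ‖x - y‖) →
      ∀ x ∈ Ω, ∀ y ∈ Ω,
        |(∫ ω, f (Φ x ω) ∂μ) - ∫ ω, f (Φ y ω) ∂μ| ≤ L * ‖x - y‖) ∧
    (∀ (f : EuclideanSpace ℝ (Fin d) → ℝ)
        (gf : EuclideanSpace ℝ (Fin d) → EuclideanSpace ℝ (Fin d)),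
      ContinuousOn f Ω → ContinuousOn gf Ω →
      (∀ x ∈ interior Ω, HasGradientAt f (gf x) x) →
      ∀ x ∈ interior Ω, ∀ G, HasGradientAt (fun z => ∫ ω, f (Φ z ω) ∂μ) G x →
        ‖G‖ ≤ ∫ ω, ‖gf (Φ x ω)‖ ∂μ) := by
  constructor
  · -- part (a)
    intro f L hf hL x hx y hy
    rcases eq_or_ne x y with rfl | hne
    · simp
    have hnorm : 0 < ‖x - y‖ := by rwa [norm_pos_iff, sub_ne_zero]
    have hL0 : 0 ≤ L := by
      nlinarith [(abs_nonneg (f x - f y)).trans (hL x hx y hy), hnorm]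
    have hintx := comp_integrable μ hΩcomp hf (hΦmeas x hx) (hΦmaps x hx)
    have hinty := comp_integrable μ hΩcomp hf (hΦmeas y hy) (hΦmaps y hy)
    rw [← integral_sub hintx hinty]
    calc |∫ ω, (f (Φ x ω) - f (Φ y ω)) ∂μ| ≤ ∫ ω, |f (Φ x ω) - f (Φ y ω)| ∂μ := by
          simpa only [Real.norm_eq_abs] using
            norm_integral_le_integral_norm (fun ω => f (Φ x ω) - f (Φ y ω))
      _ ≤ ∫ _ω, L * ‖x - y‖ ∂μ := by
          apply integral_mono (hintx.sub hinty).abs (integrable_const _)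
          intro ω
          calc |f (Φ x ω) - f (Φ y ω)| ≤ L * ‖Φ x ω - Φ y ω‖ :=
                hL _ (hΦmaps x hx ω) _ (hΦmaps y hy ω)
            _ ≤ L * ‖x - y‖ := mul_le_mul_of_nonneg_left (hΦlip ω x hx y hy) hL0
      _ = L * ‖x - y‖ := by simp
  · -- part (b)
    intro f gf hf hgf hdiff x hx G hG
    have hxΩ : x ∈ Ω := interior_subset hx
    have hgfnorm : ContinuousOn (fun w => ‖gf w‖) Ω := hgf.norm
    have hIint := comp_integrable μ hΩcomp hgfnorm (hΦmeas x hxΩ) (hΦmaps x hxΩ)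
    set I : ℝ := ∫ ω, ‖gf (Φ x ω)‖ ∂μ with hI
    have hI0 : 0 ≤ I := integral_nonneg fun ω => norm_nonneg _
    by_cases hG0 : G = 0
    · simpa [hG0] using hI0
    have hGpos : 0 < ‖G‖ := norm_pos_iff.mpr hG0
    have key : ∀ ε > (0:ℝ), ‖G‖ ≤ I + ε := by
      intro ε hε
      obtain ⟨δ, hδ, hδ'⟩ := Metric.uniformContinuousOn_iff.mp
        (hΩcomp.uniformContinuousOn_of_continuous hgf) ε hε
      -- the curve t ↦ x + t • G
      have hc : HasDerivAt (fun t : ℝ => x + t • G) G 0 := by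
        have h1 : HasDerivAt (fun t : ℝ => t • G) ((1:ℝ) • G) 0 :=
          (hasDerivAt_id (0:ℝ)).smul_const G
        simpa using h1.const_add x
      have h0 : x + (0:ℝ) • G = x := by simp
      have hφd : HasDerivAt (fun t : ℝ => ∫ ω, f (Φ (x + t • G) ω) ∂μ) (‖G‖ ^ 2) 0 := by
        have hF : HasFDerivAt (fun z => ∫ ω, f (Φ z ω) ∂μ)
            ((toDual ℝ (EuclideanSpace ℝ (Fin d))) G) ((fun t : ℝ => x + t • G) 0) := by
          rw [show (fun t : ℝ => x + t • G) 0 = x from h0]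
          exact hG.hasFDerivAt
        have h2 := hF.comp_hasDerivAt (0:ℝ) hc
        have h3 : ((toDual ℝ (EuclideanSpace ℝ (Fin d))) G) G = ‖G‖ ^ 2 := by
          rw [toDual_apply_apply, real_inner_self_eq_norm_sq]
        rw [← h3]
        simpa [Function.comp_def] using h2
      have hslope := hasDerivAt_iff_tendsto_slope.mp hφd
      -- eventual bound on the slope
      have hev : ∀ᶠ t in nhdsWithin (0:ℝ) {(0:ℝ)}ᶜ,
          |slope (fun t : ℝ => ∫ ω, f (Φ (x + t • G) ω) ∂μ) 0 t| ≤ ‖G‖ * (I + ε) := by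
        have hcont : Continuous (fun t : ℝ => x + t • G) :=
          continuous_const.add (continuous_id.smul continuous_const)
        have E1 : ∀ᶠ t in nhds (0:ℝ), x + t • G ∈ interior Ω := by
          have htd : Filter.Tendsto (fun t : ℝ => x + t • G) (nhds 0) (nhds x) := by
            simpa [h0] using hcont.tendsto 0
          exact htd.eventually (isOpen_interior.eventually_mem hx)
        have E2 : ∀ᶠ t in nhds (0:ℝ), |t| * ‖G‖ < δ := by
          have hb : Metric.ball (0:ℝ) (δ / ‖G‖) ∈ nhds (0:ℝ) :=
            Metric.ball_mem_nhds 0 (div_pos hδ hGpos)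
          filter_upwards [hb] with t ht
          rw [Metric.mem_ball, Real.dist_eq, sub_zero] at ht
          rw [← lt_div_iff₀ hGpos]
          exact ht
        have E3 : ∀ᶠ t in nhdsWithin (0:ℝ) {(0:ℝ)}ᶜ, t ≠ 0 := by
          filter_upwards [self_mem_nhdsWithin] with t ht
          exact ht
        filter_upwards [(E1.and E2).filter_mono nhdsWithin_le_nhds, E3] with t ⟨ht1, ht2⟩ ht0
        set y : EuclideanSpace ℝ (Fin d) := x + t • G with hy
        have hyΩ : y ∈ Ω := interior_subset ht1
        have hyx : ‖y - x‖ = |t| * ‖G‖ := by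
          simp [hy, norm_smul, Real.norm_eq_abs]
        -- pointwise bound
        have hpt : ∀ ω, |f (Φ y ω) - f (Φ x ω)| ≤ (‖gf (Φ x ω)‖ + ε) * (|t| * ‖G‖) := by
          intro ω
          have haΩ : Φ x ω ∈ Ω := hΦmaps x hxΩ ω
          have hbΩ : Φ y ω ∈ Ω := hΦmaps y hyΩ ω
          have hba : ‖Φ y ω - Φ x ω‖ ≤ |t| * ‖G‖ := by
            rw [← hyx]; exact hΦlip ω y hyΩ x hxΩ
          have hmvt := mvt_aux hΩconv hx hf hdiff haΩ hbΩ
            (C := ‖gf (Φ x ω)‖ + ε) (r := δ)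
            (by positivity) (lt_of_le_of_lt hba ht2)
            (fun w hwΩ hwr => by
              have hd := hδ' w hwΩ (Φ x ω) haΩ (by rwa [dist_eq_norm])
              have : ‖gf w‖ - ‖gf (Φ x ω)‖ ≤ dist (gf w) (gf (Φ x ω)) := by
                rw [dist_eq_norm]; exact norm_sub_norm_le _ _
              linarith)
          calc |f (Φ y ω) - f (Φ x ω)| ≤ (‖gf (Φ x ω)‖ + ε) * ‖Φ y ω - Φ x ω‖ := hmvt
            _ ≤ (‖gf (Φ x ω)‖ + ε) * (|t| * ‖G‖) :=
                mul_le_mul_of_nonneg_left hba (by positivity)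
        -- integrate the bound
        have hintx := comp_integrable μ hΩcomp hf (hΦmeas x hxΩ) (hΦmaps x hxΩ)
        have hinty := comp_integrable μ hΩcomp hf (hΦmeas y hyΩ) (hΦmaps y hyΩ)
        have hibound : |(∫ ω, f (Φ y ω) ∂μ) - ∫ ω, f (Φ x ω) ∂μ|
            ≤ (I + ε) * (|t| * ‖G‖) := by
          rw [← integral_sub hinty hintx]
          calc |∫ ω, (f (Φ y ω) - f (Φ x ω)) ∂μ|
              ≤ ∫ ω, |f (Φ y ω) - f (Φ x ω)| ∂μ := by
                simpa only [Real.norm_eq_abs] using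
                  norm_integral_le_integral_norm (fun ω => f (Φ y ω) - f (Φ x ω))
            _ ≤ ∫ ω, (‖gf (Φ x ω)‖ + ε) * (|t| * ‖G‖) ∂μ := by
                apply integral_mono (hinty.sub hintx).abs
                  (((hIint.add (integrable_const ε)).mul_const _))
                exact hpt
            _ = (I + ε) * (|t| * ‖G‖) := by
                rw [integral_mul_const, integral_add hIint (integrable_const ε),
                  integral_const]
                simp [hI]
        have ht0' : (0:ℝ) < |t| := abs_pos.mpr ht0
        rw [slope_def_field, abs_div, div_le_iff₀ (by simpa using ht0'), h0, sub_zero]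
        calc |(∫ ω, f (Φ (x + t • G) ω) ∂μ) - ∫ ω, f (Φ x ω) ∂μ|
            = |(∫ ω, f (Φ y ω) ∂μ) - ∫ ω, f (Φ x ω) ∂μ| := by rw [← hy]
          _ ≤ (I + ε) * (|t| * ‖G‖) := hibound
          _ = ‖G‖ * (I + ε) * |t| := by ring
      have hfin : ‖G‖ ^ 2 ≤ ‖G‖ * (I + ε) := by
        have habs : |‖G‖ ^ 2| = ‖G‖ ^ 2 := abs_of_nonneg (sq_nonneg _)
        have := le_of_tendsto hslope.abs hev
        rwa [habs] at this
      rw [sq] at hfin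
      nlinarith [hfin, hGpos]
    exact le_of_forall_pos_le_add key
end

section
/- Let Ω ⊂ ℝ^d be a compact convex set with nonempty interior, and let (P_s)_{s≥0} be a family of linear operators on C(Ω) such that P_0 is the identity, P_{s+u} = P_s ∘ P_u for all s, u ≥ 0, each P_s is positivity-preserving (f ≥ 0 implies P_s f ≥ 0), and P_s 1 = 1. Fix t > 0 and f ∈ C(Ω), and assume: (i) for every u ∈ [0, t], the function P_u f is C¹ on Ω (continuous on Ω, differentiable on the interior, gradient extending continuously to Ω); (ii) for every s ∈ [0, t] and every u ∈ [0, t], the gradient contraction |∇P_s(P_u f)(x)| ≤ (P_s|∇P_u f|)(x) holds at every interior point x; (iii) for every x ∈ Ω, the function s ↦ (P_s((P_{t−s} f)²))(x) is continuous on [0, t] and differentiable on (0, t) with derivative (P_s(|∇P_{t−s} f|²))(x). Then at every interior point x of Ω, t · |∇P_t f(x)|² ≤ (P_t f²)(x) − ((P_t f)(x))². -/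
open MeasureTheory Set

/-- Bakry–Émery type inequality `t·‖∇P_t f‖² ≤ P_t f² − (P_t f)²` for a Markov
semigroup `(P_s)` of positivity-preserving unital linear operators on `C(Ω)`,
`Ω ⊂ ℝ^d` compact convex with nonempty interior. Here `g u` denotes the
(continuous extension to `Ω` of the) gradient of `P_u f`, `hC1` says that each
`P_u f` (for `u ∈ [0,t]`) is `C¹` on `Ω`, `hgc` is the gradient contraction
`‖∇P_s(P_u f)‖ ≤ P_s‖∇P_u f‖` on the interior, and `hder` says that for each `x`
the map `s ↦ P_s((P_{t−s}f)²)(x)` is continuous on `[0,t]` and differentiable on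
`(0,t)` with derivative `P_s(‖∇P_{t−s}f‖²)(x)`. -/
theorem bakry_emery_of_gradient_contraction {d : ℕ}
    {Ω : Set (EuclideanSpace ℝ (Fin d))}
    (hΩcomp : IsCompact Ω) (hΩconv : Convex ℝ Ω) (hΩint : (interior Ω).Nonempty)
    (P : ℝ → (EuclideanSpace ℝ (Fin d) → ℝ) → EuclideanSpace ℝ (Fin d) → ℝ)
    (hP0 : ∀ f, ∀ x ∈ Ω, P 0 f x = f x)
    (hPsg : ∀ s ≥ (0 : ℝ), ∀ u ≥ (0 : ℝ), ∀ f, ∀ x ∈ Ω, P (s + u) f x = P s (P u f) x)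
    (hPlin : ∀ s ≥ (0 : ℝ), ∀ (f g : EuclideanSpace ℝ (Fin d) → ℝ) (a b : ℝ), ∀ x ∈ Ω,
      P s (fun y => a * f y + b * g y) x = a * P s f x + b * P s g x)
    (hPloc : ∀ s ≥ (0 : ℝ), ∀ f g, (∀ y ∈ Ω, f y = g y) → ∀ x ∈ Ω, P s f x = P s g x)
    (hPpos : ∀ s ≥ (0 : ℝ), ∀ f, (∀ y ∈ Ω, 0 ≤ f y) → ∀ x ∈ Ω, 0 ≤ P s f x)
    (hPone : ∀ s ≥ (0 : ℝ), ∀ x ∈ Ω, P s (fun _ => (1 : ℝ)) x = 1)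
    (hPcont : ∀ s ≥ (0 : ℝ), ∀ f, ContinuousOn f Ω → ContinuousOn (P s f) Ω)
    {t : ℝ} (ht : 0 < t)
    (f : EuclideanSpace ℝ (Fin d) → ℝ) (hf : ContinuousOn f Ω)
    (g : ℝ → EuclideanSpace ℝ (Fin d) → EuclideanSpace ℝ (Fin d))
    (hC1 : ∀ u ∈ Icc (0 : ℝ) t, ContinuousOn (P u f) Ω ∧ ContinuousOn (g u) Ω ∧
      ∀ x ∈ interior Ω, HasGradientAt (P u f) (g u x) x)
    (hgc : ∀ s ∈ Icc (0 : ℝ) t, ∀ u ∈ Icc (0 : ℝ) t, ∀ x ∈ interior Ω, ∀ G,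
      HasGradientAt (P s (P u f)) G x → ‖G‖ ≤ P s (fun y => ‖g u y‖) x)
    (hder : ∀ x ∈ Ω,
      ContinuousOn (fun s => P s (fun y => (P (t - s) f y) ^ 2) x) (Icc (0 : ℝ) t) ∧
      ∀ s ∈ Ioo (0 : ℝ) t,
        HasDerivAt (fun r => P r (fun y => (P (t - r) f y) ^ 2) x)
          (P s (fun y => ‖g (t - s) y‖ ^ 2) x) s) :
    ∀ x ∈ interior Ω, ∀ G, HasGradientAt (P t f) G x →
      t * ‖G‖ ^ 2 ≤ P t (fun y => f y ^ 2) x - (P t f x) ^ 2 := by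

  intro x hx G hG
  have hxΩ : x ∈ Ω := interior_subset hx
  obtain ⟨hφcont, hφder⟩ := hder x hxΩ
  set φ : ℝ → ℝ := fun s => P s (fun y => (P (t - s) f y) ^ 2) x with hφ
  set c : ℝ := ‖G‖ ^ 2 with hc
  have key : ∀ s ∈ Ioo (0 : ℝ) t, c ≤ P s (fun y => ‖g (t - s) y‖ ^ 2) x := by
    intro s hs
    have hs0 : (0 : ℝ) ≤ s := hs.1.le
    have hts : t - s ∈ Icc (0 : ℝ) t := ⟨by linarith [hs.2], by linarith [hs.1]⟩
    have heq : ∀ y ∈ Ω, P t f y = P s (P (t - s) f) y := by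
      intro y hy
      have h := hPsg s hs0 (t - s) hts.1 f y hy
      rwa [show s + (t - s) = t by ring] at h
    have hG' : HasGradientAt (P s (P (t - s) f)) G x := by
      have hfd := hasGradientAt_iff_hasFDerivAt.mp hG
      refine hasGradientAt_iff_hasFDerivAt.mpr (hfd.congr_of_eventuallyEq ?_)
      filter_upwards [isOpen_interior.mem_nhds hx] with y hy
      exact (heq y (interior_subset hy)).symm
    have hA : ‖G‖ ≤ P s (fun y => ‖g (t - s) y‖) x :=
      hgc s ⟨hs0, hs.2.le⟩ (t - s) hts x hx G hG'
    set A : ℝ := P s (fun y => ‖g (t - s) y‖) x with hAdef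
    have hA0 : 0 ≤ A := hPpos s hs0 _ (fun y _ => norm_nonneg _) x hxΩ
    have hpos : 0 ≤ P s (fun y => (‖g (t - s) y‖ - A) ^ 2) x :=
      hPpos s hs0 _ (fun y _ => sq_nonneg _) x hxΩ
    have hexp : P s (fun y => (‖g (t - s) y‖ - A) ^ 2) x
        = P s (fun y => ‖g (t - s) y‖ ^ 2) x - 2 * A * A + A ^ 2 := by
      have e1 : P s (fun y => (‖g (t - s) y‖ - A) ^ 2) x
          = P s (fun y => (1 : ℝ) * ((1 : ℝ) * ‖g (t - s) y‖ ^ 2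
              + (-(2 * A)) * ‖g (t - s) y‖) + A ^ 2 * 1) x :=
        hPloc s hs0 _ _ (fun y _ => by ring) x hxΩ
      rw [e1, hPlin s hs0 _ _ 1 (A ^ 2) x hxΩ, hPone s hs0 x hxΩ,
        hPlin s hs0 _ _ 1 (-(2 * A)) x hxΩ]
      ring
    have hA2 : A ^ 2 ≤ P s (fun y => ‖g (t - s) y‖ ^ 2) x := by nlinarith [hpos, hexp]
    have hG2 : c ≤ A ^ 2 := by
      simpa [hc] using pow_le_pow_left₀ (norm_nonneg G) hA 2
    linarith
  set ψ : ℝ → ℝ := fun s => φ s - c * s with hψ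
  have hψder : ∀ s ∈ Ioo (0 : ℝ) t,
      HasDerivAt ψ (P s (fun y => ‖g (t - s) y‖ ^ 2) x - c) s := by
    intro s hs
    have h1 := hφder s hs
    have h2 : HasDerivAt (fun r : ℝ => c * r) c s := by
      simpa using (hasDerivAt_id s).const_mul c
    exact h1.sub h2
  have hψcont : ContinuousOn ψ (Icc 0 t) :=
    hφcont.sub ((continuous_const.mul continuous_id).continuousOn)
  have hmono : MonotoneOn ψ (Icc 0 t) := by
    apply monotoneOn_of_deriv_nonneg (convex_Icc 0 t) hψcont
    · intro s hs
      rw [interior_Icc] at hs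
      exact ((hψder s hs).differentiableAt).differentiableWithinAt
    · intro s hs
      rw [interior_Icc] at hs
      rw [(hψder s hs).deriv]
      linarith [key s hs]
  have hle := hmono (left_mem_Icc.mpr ht.le) (right_mem_Icc.mpr ht.le) ht.le
  have h0 : φ 0 = (P t f x) ^ 2 := by
    simp only [hφ, sub_zero]
    exact hP0 (fun y => (P t f y) ^ 2) x hxΩ
  have hT : φ t = P t (fun y => f y ^ 2) x := by
    simp only [hφ]
    exact hPloc t ht.le _ _ (fun y hy => by rw [sub_self, hP0 f y hy]) x hxΩ
  simp only [hψ, mul_zero, sub_zero] at hle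
  rw [h0, hT] at hle
  linarith
end

section
/- Let Ω ⊂ ℝ^d be a compact convex set with nonempty interior, equipped with the Lebesgue measure. Let (P_t)_{t≥0} be a family of linear operators on the bounded Borel functions on Ω with P_0 the identity, P_{t+s} = P_t ∘ P_s, each P_t positivity-preserving, P_t 1 = 1, and ∫_Ω P_t f(x) dx = ∫_Ω f(x) dx for all t and all bounded Borel f. Assume there are constants λ > 0 and C₁, C₂ > 0 such that: (i) ‖P_t f‖_{L²(Ω)} ≤ e^{−λt} ‖f‖_{L²(Ω)} for all t ≥ 0 and all bounded Borel f with ∫_Ω f = 0; (ii) ‖P_t f‖_∞ ≤ C₁ t^{−d/2} ‖f‖_{L¹(Ω)} for all t ∈ (0, 1]; (iii) for all t ∈ (0, 1], P_t f is differentiable on the interior of Ω and sup over interior x of |∇P_t f(x)| is at most C₂ t^{−(d+1)/2} ‖f‖_{L¹(Ω)}. Then there exists a constant C₃ > 0 such that for every t > 0 and every bounded Borel f, P_t f is differentiable on the interior of Ω and sup over interior x of |∇P_t f(x)| is at most C₃ t^{−(d+1)/2} ‖f‖_{L¹(Ω)}. -/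
set_option maxHeartbeats 1000000


open MeasureTheory Set
open scoped Gradient

private lemma gradient_const_add' {d : ℕ} (m : ℝ)
    (h : EuclideanSpace ℝ (Fin d) → ℝ) (x : EuclideanSpace ℝ (Fin d)) :
    ∇ (fun y => m + h y) x = ∇ h x := by
  simp only [gradient, fderiv_const_add]

/-- Extension of the gradient estimate `‖∇P_t‖_{1→∞} ≤ C₃ t^{-(d+1)/2}` from small
times to all positive times, for a Markov semigroup `(P_t)` of positivity-preserving
unital mass-preserving linear operators on the bounded Borel functions on a compact
convex `Ω ⊂ ℝ^d` with nonempty interior, given the spectral-gap `L²` decay for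
mean-zero functions (`hgap`), the ultracontractive bound (`hUC`) and the short-time
gradient bound (`hgrad`). -/
theorem gradient_bound_all_time {d : ℕ}
    {Ω : Set (EuclideanSpace ℝ (Fin d))}
    (hΩcomp : IsCompact Ω) (hΩconv : Convex ℝ Ω) (hΩint : (interior Ω).Nonempty)
    (P : ℝ → (EuclideanSpace ℝ (Fin d) → ℝ) → EuclideanSpace ℝ (Fin d) → ℝ)
    (hP0 : ∀ f, ∀ x ∈ Ω, P 0 f x = f x)
    (hPsg : ∀ t ≥ (0 : ℝ), ∀ s ≥ (0 : ℝ), ∀ f, ∀ x ∈ Ω, P (t + s) f x = P t (P s f) x)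
    (hPlin : ∀ t ≥ (0 : ℝ), ∀ (f g : EuclideanSpace ℝ (Fin d) → ℝ) (a b : ℝ), ∀ x ∈ Ω,
      P t (fun y => a * f y + b * g y) x = a * P t f x + b * P t g x)
    (hPpos : ∀ t ≥ (0 : ℝ), ∀ f, (∀ y ∈ Ω, 0 ≤ f y) → ∀ x ∈ Ω, 0 ≤ P t f x)
    (hPone : ∀ t ≥ (0 : ℝ), ∀ x ∈ Ω, P t (fun _ => (1 : ℝ)) x = 1)
    (hPbb : ∀ t ≥ (0 : ℝ), ∀ f, Measurable f → (∃ M, ∀ y, |f y| ≤ M) →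
      Measurable (P t f) ∧ ∃ M, ∀ y, |P t f y| ≤ M)
    (hPmass : ∀ t ≥ (0 : ℝ), ∀ f, Measurable f → (∃ M, ∀ y, |f y| ≤ M) →
      ∫ x in Ω, P t f x = ∫ x in Ω, f x)
    {lam C₁ C₂ : ℝ} (hlam : 0 < lam) (hC₁ : 0 < C₁) (hC₂ : 0 < C₂)
    (hgap : ∀ t ≥ (0 : ℝ), ∀ f, Measurable f → (∃ M, ∀ y, |f y| ≤ M) →
      (∫ x in Ω, f x) = 0 →
      Real.sqrt (∫ x in Ω, (P t f x) ^ 2) ≤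
        Real.exp (-lam * t) * Real.sqrt (∫ x in Ω, f x ^ 2))
    (hUC : ∀ t ∈ Ioc (0 : ℝ) 1, ∀ f, Measurable f → (∃ M, ∀ y, |f y| ≤ M) →
      ∀ x ∈ Ω, |P t f x| ≤ C₁ * t ^ (-(d : ℝ) / 2) * ∫ y in Ω, |f y|)
    (hgrad : ∀ t ∈ Ioc (0 : ℝ) 1, ∀ f, Measurable f → (∃ M, ∀ y, |f y| ≤ M) →
      DifferentiableOn ℝ (P t f) (interior Ω) ∧ ∀ x ∈ interior Ω,
        ‖∇ (P t f) x‖ ≤ C₂ * t ^ (-((d : ℝ) + 1) / 2) * ∫ y in Ω, |f y|) :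
    ∃ C₃ > (0 : ℝ), ∀ t > (0 : ℝ), ∀ f, Measurable f → (∃ M, ∀ y, |f y| ≤ M) →
      DifferentiableOn ℝ (P t f) (interior Ω) ∧ ∀ x ∈ interior Ω,
        ‖∇ (P t f) x‖ ≤ C₃ * t ^ (-((d : ℝ) + 1) / 2) * ∫ y in Ω, |f y| := by
  classical
  have hΩmeas : MeasurableSet Ω := hΩcomp.isClosed.measurableSet
  have hfin : volume Ω < ⊤ := hΩcomp.measure_lt_top
  have hposμ : 0 < volume Ω :=
    lt_of_lt_of_le (isOpen_interior.measure_pos volume hΩint) (measure_mono interior_subset)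
  set V : ℝ := (volume Ω).toReal with hVdef
  have hV : 0 < V := ENNReal.toReal_pos hposμ.ne' hfin.ne
  haveI : IsFiniteMeasure (volume.restrict Ω) :=
    ⟨by simpa [Measure.restrict_apply_univ] using hfin⟩
  -- integrability of bounded measurable functions on Ω
  have hinteg : ∀ (u : EuclideanSpace ℝ (Fin d) → ℝ), Measurable u →
      (∃ M, ∀ y, |u y| ≤ M) → IntegrableOn u Ω volume := by
    rintro u hu ⟨M, hM⟩
    exact Integrable.mono' (integrable_const M) hu.aestronglyMeasurable
      (ae_of_all _ fun y => by simpa [Real.norm_eq_abs] using hM y)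
  -- Cauchy–Schwarz
  have hCS : ∀ (u : EuclideanSpace ℝ (Fin d) → ℝ), Measurable u →
      (∃ M, ∀ y, |u y| ≤ M) →
      (∫ x in Ω, |u x|) ≤ Real.sqrt V * Real.sqrt (∫ x in Ω, u x ^ 2) := by
    rintro u hu ⟨M, hM⟩
    have hpq : Real.HolderConjugate 2 2 := Real.HolderConjugate.two_two
    have h1 : MemLp (fun _ : EuclideanSpace ℝ (Fin d) => (1 : ℝ)) (ENNReal.ofReal 2)
        (volume.restrict Ω) := memLp_const 1
    have h2 : MemLp (fun x => |u x|) (ENNReal.ofReal 2) (volume.restrict Ω) :=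
      MemLp.of_bound hu.abs.aestronglyMeasurable M
        (ae_of_all _ fun y => by simpa [Real.norm_eq_abs, abs_abs] using hM y)
    have key := integral_mul_le_Lp_mul_Lq_of_nonneg hpq
      (μ := volume.restrict Ω) (f := fun _ => (1 : ℝ)) (g := fun x => |u x|)
      (ae_of_all _ fun _ => zero_le_one) (ae_of_all _ fun x => abs_nonneg _) h1 h2
    have e1 : (∫ x in Ω, (1 : ℝ) * |u x|) = ∫ x in Ω, |u x| := by simp
    have e2 : (∫ _x in Ω, (1 : ℝ) ^ (2 : ℝ)) = V := by
      simp [Real.one_rpow, hVdef, Measure.real]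
    have e3 : (∫ x in Ω, |u x| ^ (2 : ℝ)) = ∫ x in Ω, u x ^ 2 := by
      refine setIntegral_congr_fun hΩmeas fun x _ => ?_
      rw [show (2 : ℝ) = ((2 : ℕ) : ℝ) by norm_num, Real.rpow_natCast, sq_abs]
    rw [e1, e2, e3] at key
    calc (∫ x in Ω, |u x|) ≤ V ^ (1 / (2:ℝ)) * (∫ x in Ω, u x ^ 2) ^ (1 / (2:ℝ)) := key
      _ = Real.sqrt V * Real.sqrt (∫ x in Ω, u x ^ 2) := by
          rw [Real.sqrt_eq_rpow, Real.sqrt_eq_rpow]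
  -- constants
  set a : ℝ := ((d : ℝ) + 1) / 2 with hadef
  have ha : 0 < a := by positivity
  set A : ℝ := Real.exp (lam - a - a * Real.log (lam / a)) with hAdef
  have hA0 : 0 < A := Real.exp_pos _
  set B₁ : ℝ := C₁ * (1 / 2 : ℝ) ^ (-(d : ℝ) / 2) with hB₁def
  set B₂ : ℝ := C₂ * (1 / 2 : ℝ) ^ (-((d : ℝ) + 1) / 2) with hB₂def
  have hB₁ : 0 < B₁ := mul_pos hC₁ (Real.rpow_pos_of_pos (by norm_num) _)
  have hB₂ : 0 < B₂ := mul_pos hC₂ (Real.rpow_pos_of_pos (by norm_num) _)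
  set K : ℝ := 2 * B₁ * B₂ * V with hKdef
  have hK : 0 < K := by positivity
  set C₃ : ℝ := max C₂ (K * A) with hC₃def
  have hC₃ : 0 < C₃ := lt_of_lt_of_le hC₂ (le_max_left _ _)
  -- decay of the exponential against the polynomial
  have hAbound : ∀ t : ℝ, 1 ≤ t → Real.exp (-lam * (t - 1)) ≤ A * t ^ (-a) := by
    intro t ht
    have ht0 : (0 : ℝ) < t := lt_of_lt_of_le one_pos ht
    have hc : (0 : ℝ) < lam / a := by positivity
    have hlog : Real.log ((lam / a) * t) ≤ (lam / a) * t - 1 :=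
      Real.log_le_sub_one_of_pos (by positivity)
    have hlog2 : Real.log (lam / a) + Real.log t ≤ (lam / a) * t - 1 := by
      rwa [Real.log_mul hc.ne' ht0.ne'] at hlog
    have hkey : Real.exp (-lam * (t - 1)) * t ^ a ≤ A := by
      rw [Real.rpow_def_of_pos ht0, ← Real.exp_add]
      rw [hAdef]
      apply Real.exp_le_exp.2
      have : a * Real.log t ≤ lam * t - a - a * Real.log (lam / a) := by
        have := mul_le_mul_of_nonneg_left hlog2 ha.le
        have hla : a * (lam / a) = lam := by field_simp
        nlinarith
      nlinarith
    have htpow : (0 : ℝ) < t ^ a := Real.rpow_pos_of_pos ht0 _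
    rw [Real.rpow_neg ht0.le]
    rw [← le_div_iff₀ htpow] at hkey
    calc Real.exp (-lam * (t - 1)) ≤ A / t ^ a := hkey
      _ = A * (t ^ a)⁻¹ := by rw [div_eq_mul_inv]
  refine ⟨C₃, hC₃, ?_⟩
  intro t ht f hf hfb
  have hI0 : (0 : ℝ) ≤ ∫ y in Ω, |f y| := integral_nonneg fun y => abs_nonneg _
  have htpow0 : (0 : ℝ) < t ^ (-((d : ℝ) + 1) / 2) := Real.rpow_pos_of_pos ht _
  by_cases ht1 : t ≤ 1
  · -- small time: direct
    obtain ⟨hdiff, hbound⟩ := hgrad t ⟨ht, ht1⟩ f hf hfb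
    refine ⟨hdiff, fun x hx => ?_⟩
    calc ‖∇ (P t f) x‖ ≤ C₂ * t ^ (-((d : ℝ) + 1) / 2) * ∫ y in Ω, |f y| := hbound x hx
      _ ≤ C₃ * t ^ (-((d : ℝ) + 1) / 2) * ∫ y in Ω, |f y| := by
          gcongr
          exact le_max_left _ _
  · -- large time
    push_neg at ht1
    obtain ⟨M, hM⟩ := hfb
    set m : ℝ := (∫ x in Ω, f x) / V with hmdef
    set g : EuclideanSpace ℝ (Fin d) → ℝ := fun y => f y - m with hgdef
    have hg : Measurable g := hf.sub measurable_const
    have hgB : ∃ M', ∀ y, |g y| ≤ M' := by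
      refine ⟨M + |m|, fun y => ?_⟩
      calc |g y| = |f y + (-m)| := by rw [hgdef]; ring_nf
        _ ≤ |f y| + |(-m)| := abs_add_le _ _
        _ ≤ M + |m| := by rw [abs_neg]; exact add_le_add (hM y) le_rfl
    have hintf : IntegrableOn f Ω volume := hinteg f hf ⟨M, hM⟩
    have hgmean : (∫ x in Ω, g x) = 0 := by
      have : (∫ x in Ω, g x) = (∫ x in Ω, f x) - (∫ _x in Ω, m) :=
        integral_sub hintf (integrable_const m)
      rw [this, setIntegral_const, smul_eq_mul, hmdef, show volume.real Ω = V from rfl]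
      field_simp
      ring
    have hIg : (∫ y in Ω, |g y|) ≤ 2 * ∫ y in Ω, |f y| := by
      have hstep : (∫ y in Ω, |g y|) ≤ ∫ y in Ω, (|f y| + |m|) := by
        refine setIntegral_mono_on ((hinteg g hg hgB).abs)
          ((hintf.abs).add (integrable_const _)) hΩmeas fun y _ => ?_
        calc |g y| = |f y + (-m)| := by rw [hgdef]; ring_nf
          _ ≤ |f y| + |(-m)| := abs_add_le _ _
          _ = |f y| + |m| := by rw [abs_neg]
      have hsplit : (∫ y in Ω, (|f y| + |m|)) = (∫ y in Ω, |f y|) + V * |m| := by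
        rw [integral_add hintf.abs (integrable_const _), setIntegral_const, smul_eq_mul, show volume.real Ω = V from rfl]
      have hm : V * |m| ≤ ∫ y in Ω, |f y| := by
        have h1 : |∫ x in Ω, f x| ≤ ∫ y in Ω, |f y| := by
          simpa [Real.norm_eq_abs] using norm_integral_le_integral_norm (μ := volume.restrict Ω) f
        have h2 : V * |m| = |∫ x in Ω, f x| := by
          rw [hmdef, abs_div, abs_of_pos hV]
          field_simp
        linarith
      linarith
    -- semigroup decomposition
    have hhalf : (0 : ℝ) < 1 / 2 ∧ (1 / 2 : ℝ) ≤ 1 := by norm_num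
    set h : EuclideanSpace ℝ (Fin d) → ℝ := P (t - 1 / 2) g with hhdef
    have hhm : Measurable h ∧ ∃ M', ∀ y, |h y| ≤ M' :=
      hPbb (t - 1 / 2) (by linarith) g hg hgB
    set k : EuclideanSpace ℝ (Fin d) → ℝ := P (1 / 2) g with hkdef
    have hkm : Measurable k ∧ ∃ M', ∀ y, |k y| ≤ M' :=
      hPbb (1 / 2) (by norm_num) g hg hgB
    have hkmean : (∫ x in Ω, k x) = 0 := by
      rw [hkdef, hPmass (1 / 2) (by norm_num) g hg hgB, hgmean]
    have hkbound : ∀ x ∈ Ω, |k x| ≤ B₁ * ∫ y in Ω, |g y| := by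
      intro x hx
      have := hUC (1 / 2) ⟨by norm_num, by norm_num⟩ g hg hgB x hx
      rw [hB₁def]
      exact this
    have hhk : ∀ y ∈ Ω, h y = P (t - 1) k y := by
      intro y hy
      have := hPsg (t - 1) (by linarith) (1 / 2) (by norm_num) g y hy
      rw [show (t - 1) + 1 / 2 = t - 1 / 2 by ring] at this
      rw [hhdef, hkdef]
      exact this
    -- key identity: P t f = m + P (1/2) h on Ω
    have hEq : ∀ y ∈ Ω, P t f y = m + P (1 / 2) h y := by
      intro y hy
      have h1 := hPlin t ht.le (fun _ => (1 : ℝ)) g m 1 y hy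
      have h2 : (fun z => m * (fun _ => (1 : ℝ)) z + 1 * g z) = f := by
        funext z
        simp [hgdef]
      rw [h2] at h1
      rw [h1, hPone t ht.le y hy, one_mul, mul_one]
      congr 1
      have h3 := hPsg (1 / 2) (by norm_num) (t - 1 / 2) (by linarith) g y hy
      rw [show (1 / 2 : ℝ) + (t - 1 / 2) = t by ring] at h3
      rw [h3, hhdef]
    have hEqNhds : ∀ x ∈ interior Ω, P t f =ᶠ[nhds x] fun y => m + P (1 / 2) h y :=
      fun x hx => Filter.eventuallyEq_of_mem (isOpen_interior.mem_nhds hx)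
        fun y hy => hEq y (interior_subset hy)
    obtain ⟨hdiff12, hbound12⟩ := hgrad (1 / 2) ⟨by norm_num, by norm_num⟩ h hhm.1 hhm.2
    constructor
    · intro x hx
      have hd : DifferentiableAt ℝ (P (1 / 2) h) x :=
        (hdiff12 x hx).differentiableAt (isOpen_interior.mem_nhds hx)
      have hd2 : DifferentiableAt ℝ (fun y => m + P (1 / 2) h y) x :=
        (differentiableAt_const m).add hd
      exact (hd2.congr_of_eventuallyEq (hEqNhds x hx)).differentiableWithinAt
    · intro x hx
      have hgradeq : ∇ (P t f) x = ∇ (P (1 / 2) h) x := by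
        rw [(hEqNhds x hx).gradient_eq, gradient_const_add']
      -- chain of estimates
      have est1 : ‖∇ (P (1 / 2) h) x‖ ≤ B₂ * ∫ y in Ω, |h y| := hbound12 x hx
      have est2 : (∫ y in Ω, |h y|) ≤ Real.sqrt V * Real.sqrt (∫ y in Ω, h y ^ 2) :=
        hCS h hhm.1 hhm.2
      have est3 : (∫ y in Ω, h y ^ 2) = ∫ y in Ω, (P (t - 1) k y) ^ 2 :=
        setIntegral_congr_fun hΩmeas fun y hy => by rw [hhk y hy]
      have est4 : Real.sqrt (∫ y in Ω, (P (t - 1) k y) ^ 2) ≤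
          Real.exp (-lam * (t - 1)) * Real.sqrt (∫ y in Ω, k y ^ 2) :=
        hgap (t - 1) (by linarith) k hkm.1 hkm.2 hkmean
      set Ig : ℝ := ∫ y in Ω, |g y| with hIgdef
      have hIg0 : 0 ≤ Ig := integral_nonneg fun y => abs_nonneg _
      have est5 : Real.sqrt (∫ y in Ω, k y ^ 2) ≤ B₁ * Ig * Real.sqrt V := by
        have hb : (∫ y in Ω, k y ^ 2) ≤ (B₁ * Ig) ^ 2 * V := by
          have hmono : (∫ y in Ω, k y ^ 2) ≤ ∫ _y in Ω, (B₁ * Ig) ^ 2 := by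
            refine setIntegral_mono_on ?_ (integrable_const _) hΩmeas fun y hy => ?_
            · obtain ⟨M', hM'⟩ := hkm.2
              exact hinteg (fun y => k y ^ 2) (hkm.1.pow_const 2)
                ⟨M' ^ 2, fun y => by
                  rw [abs_pow]
                  exact pow_le_pow_left₀ (abs_nonneg _) (hM' y) 2⟩
            · calc k y ^ 2 = |k y| ^ 2 := (sq_abs _).symm
                _ ≤ (B₁ * Ig) ^ 2 := pow_le_pow_left₀ (abs_nonneg _) (hkbound y hy) 2
          rw [setIntegral_const, smul_eq_mul] at hmono
          calc (∫ y in Ω, k y ^ 2) ≤ V * (B₁ * Ig) ^ 2 := hmono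
            _ = (B₁ * Ig) ^ 2 * V := by ring
        calc Real.sqrt (∫ y in Ω, k y ^ 2) ≤ Real.sqrt ((B₁ * Ig) ^ 2 * V) :=
              Real.sqrt_le_sqrt hb
          _ = B₁ * Ig * Real.sqrt V := by
              rw [Real.sqrt_mul (sq_nonneg _), Real.sqrt_sq (by positivity)]
      have hexp0 : (0 : ℝ) ≤ Real.exp (-lam * (t - 1)) := (Real.exp_pos _).le
      have hVV : Real.sqrt V * Real.sqrt V = V := Real.mul_self_sqrt hV.le
      set I : ℝ := ∫ y in Ω, |f y| with hIdef
      have hta : t ^ (-((d : ℝ) + 1) / 2) = t ^ (-a) := by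
        congr 1
        rw [hadef]; ring
      calc ‖∇ (P t f) x‖ = ‖∇ (P (1 / 2) h) x‖ := by rw [hgradeq]
        _ ≤ B₂ * ∫ y in Ω, |h y| := est1
        _ ≤ B₂ * (Real.sqrt V * Real.sqrt (∫ y in Ω, h y ^ 2)) := by gcongr
        _ = B₂ * (Real.sqrt V * Real.sqrt (∫ y in Ω, (P (t - 1) k y) ^ 2)) := by rw [est3]
        _ ≤ B₂ * (Real.sqrt V * (Real.exp (-lam * (t - 1)) *
              Real.sqrt (∫ y in Ω, k y ^ 2))) := by
            gcongr
        _ ≤ B₂ * (Real.sqrt V * (Real.exp (-lam * (t - 1)) * (B₁ * Ig * Real.sqrt V))) := by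
            gcongr
        _ ≤ B₂ * (Real.sqrt V * ((A * t ^ (-a)) * (B₁ * (2 * I) * Real.sqrt V))) := by
            gcongr
            · exact hAbound t ht1.le
        _ = (K * A) * t ^ (-a) * I := by
            rw [hKdef]
            linear_combination (B₂ * A * t ^ (-a) * B₁ * 2 * I) * hVV
        _ ≤ C₃ * t ^ (-a) * I := by
            have hIg' : 0 ≤ t ^ (-a) := (Real.rpow_pos_of_pos ht _).le
            gcongr
            exact le_max_right _ _
        _ = C₃ * t ^ (-((d : ℝ) + 1) / 2) * I := by rw [hta]
end
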